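/- arXiv:2008.02008 — 9 statements merged into one kernel-verified Lean document; each statement's English description precedes it below -/
import Mathlib

section
/- For all positive integers k and n, every subset X of the grid {0,1,...,k}^n with |X| > k^n contains k+1 points x^0, x^1, ..., x^k such that the Chebyshev (max-norm) distance between x^s and x^t equals |s - t| for all 0 ≤ s, t ≤ k. -/
open Classical in
/-- There is an exact baton climbing from `x` in coordinate `i` all the way to level `k`,
with all points in `X`. -/
def Climb (k : ℕ) {n : ℕ} (X : Finset (Fin n → ℝ)) (i : Fin n) (x : Fin n → ℝ) : Prop :=
  ∃ m : ℕ, ∃ w : ℕ → Fin n → ℝ, w 0 = x ∧ (∀ j, j ≤ m → w j ∈ X) ∧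
    (∀ j, j ≤ m → w j i = x i + j) ∧
    (∀ a b, a ≤ m → b ≤ m → dist (w a) (w b) = |(a : ℝ) - (b : ℝ)|) ∧
    x i + m = k

lemma abs_coord_le_dist {n : ℕ} (x y : Fin n → ℝ) (i : Fin n) : |x i - y i| ≤ dist x y := by
  rw [← Real.dist_eq]; exact dist_le_pi_dist x y i

lemma dist_le_of_forall {n : ℕ} (x y : Fin n → ℝ) {r : ℝ} (hr : 0 ≤ r)
    (h : ∀ i, |x i - y i| ≤ r) : dist x y ≤ r := by
  rw [dist_pi_le_iff hr]
  intro i; rw [Real.dist_eq]; exact h i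

lemma climb_top {k n : ℕ} {X : Finset (Fin n → ℝ)} {i : Fin n} {x : Fin n → ℝ}
    (hx : x ∈ X) (h : x i = (k : ℝ)) : Climb k X i x := by
  refine ⟨0, fun _ => x, rfl, ?_, ?_, ?_, by simpa using h⟩
  · intro j hj; exact hx
  · intro j hj
    interval_cases j
    simp
  · intro a b ha hb
    interval_cases a
    interval_cases b
    simp

lemma climb_prepend {k n : ℕ} {X : Finset (Fin n → ℝ)} {i : Fin n} {x y : Fin n → ℝ}
    (hy : y ∈ X) (hd : dist y x ≤ 1) (hyx : y i + 1 = x i) (hc : Climb k X i x) :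
    Climb k X i y := by
  obtain ⟨m, w, hw0, hmem, hcoord, hdist, htop⟩ := hc
  refine ⟨m + 1, fun j => if j = 0 then y else w (j - 1), by simp, ?_, ?_, ?_, ?_⟩
  · intro j hj
    rcases Nat.eq_zero_or_pos j with h0 | h0
    · simpa [h0] using hy
    · have : j ≠ 0 := by omega
      simp only [this, if_false]
      exact hmem _ (by omega)
  · intro j hj
    rcases Nat.eq_zero_or_pos j with h0 | h0
    · simp [h0]
    · obtain ⟨j', rfl⟩ : ∃ j', j = j' + 1 := ⟨j - 1, by omega⟩
      have := hcoord j' (by omega)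
      beta_reduce
      rw [if_neg (Nat.succ_ne_zero j'), Nat.add_sub_cancel, this, ← hyx]
      push_cast; ring
  · have key : ∀ b ≤ m, dist y (w b) = (b : ℝ) + 1 := by
      intro b hb
      have hub : dist y (w b) ≤ (b : ℝ) + 1 := by
        calc dist y (w b) ≤ dist y x + dist x (w b) := dist_triangle _ _ _
        _ ≤ 1 + (b : ℝ) := by
            have := hdist 0 b (by omega) hb
            rw [hw0] at this
            have h2 : dist x (w b) = (b : ℝ) := by
              rw [dist_comm] at this
              rw [dist_comm, this]
              simp [abs_of_nonpos]
            rw [h2]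
            linarith
        _ = (b : ℝ) + 1 := by ring
      have hlb : (b : ℝ) + 1 ≤ dist y (w b) := by
        have h1 : |w b i - y i| ≤ dist (w b) y := abs_coord_le_dist _ _ _
        have h2 : w b i = x i + b := hcoord b hb
        rw [dist_comm] at h1
        have : w b i - y i = (b : ℝ) + 1 := by rw [h2, ← hyx]; ring
        rw [this] at h1
        calc (b : ℝ) + 1 = |(b : ℝ) + 1| := by
              rw [abs_of_nonneg]; positivity
        _ ≤ dist y (w b) := h1
      linarith
    intro a b ha hb
    rcases Nat.eq_zero_or_pos a with ha0 | ha0 <;> rcases Nat.eq_zero_or_pos b with hb0 | hb0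
    · subst ha0; subst hb0; simp
    · obtain ⟨b', rfl⟩ : ∃ b', b = b' + 1 := ⟨b - 1, by omega⟩
      subst ha0
      beta_reduce
      rw [if_pos rfl, if_neg (Nat.succ_ne_zero b'), Nat.add_sub_cancel, key b' (by omega)]
      rw [abs_of_nonpos (by push_cast; linarith [Nat.cast_nonneg (α := ℝ) b'])]
      push_cast; ring
    · obtain ⟨a', rfl⟩ : ∃ a', a = a' + 1 := ⟨a - 1, by omega⟩
      subst hb0
      beta_reduce
      rw [if_pos rfl, if_neg (Nat.succ_ne_zero a'), Nat.add_sub_cancel, dist_comm,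
        key a' (by omega)]
      rw [abs_of_nonneg (by push_cast; linarith [Nat.cast_nonneg (α := ℝ) a'])]
      push_cast; ring
    · obtain ⟨a', rfl⟩ : ∃ a', a = a' + 1 := ⟨a - 1, by omega⟩
      obtain ⟨b', rfl⟩ : ∃ b', b = b' + 1 := ⟨b - 1, by omega⟩
      beta_reduce
      rw [if_neg (Nat.succ_ne_zero a'), if_neg (Nat.succ_ne_zero b'), Nat.add_sub_cancel,
        Nat.add_sub_cancel, hdist a' b' (by omega) (by omega)]
      congr 1
      push_cast; ring
  · rw [← hyx] at htop
    push_cast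
    push_cast at htop
    linarith

/-- Every subset `X` of the grid `{0,…,k}^n` with `|X| > k^n` contains an
isometric copy of the baton `B_k` in the Chebyshev (sup) metric. -/
theorem stmt_0 (k n : ℕ) (hk : 0 < k) (hn : 0 < n)
    (X : Finset (Fin n → ℝ))
    (hX : ∀ x ∈ X, ∀ i : Fin n, ∃ j : ℕ, j ≤ k ∧ x i = (j : ℝ))
    (hcard : X.card > k ^ n) :
    ∃ x : Fin (k + 1) → (Fin n → ℝ), (∀ s, x s ∈ X) ∧
      ∀ s t : Fin (k + 1), dist (x s) (x t) = |(s : ℝ) - (t : ℝ)| := by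
  classical
  by_cases hzero : ∃ x ∈ X, ∃ i : Fin n, x i = 0 ∧ Climb k X i x
  · obtain ⟨x0, hx0X, i, hx0i, m, w, hw0, hmem, hcoord, hdist, htop⟩ := hzero
    have hmk : m = k := by
      have : (m : ℝ) = (k : ℝ) := by rw [hx0i] at htop; linarith
      exact_mod_cast this
    subst hmk
    refine ⟨fun s => w s, fun s => hmem s (Nat.lt_succ_iff.mp s.isLt), fun s t => ?_⟩
    exact hdist s t (Nat.lt_succ_iff.mp s.isLt) (Nat.lt_succ_iff.mp t.isLt)
  · push_neg at hzero
    exfalso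
    set φ : (Fin n → ℝ) → (Fin n → ℝ) :=
      fun x j => x j - (if Climb k X j x then (1 : ℝ) else 0) with hφ
    set emb : (Fin n → Fin k) → (Fin n → ℝ) := fun g j => ((g j : ℕ) : ℝ) with hemb
    set G' := (Finset.univ : Finset (Fin n → Fin k)).image emb with hG'
    have hmaps : ∀ x ∈ X, φ x ∈ G' := by
      intro x hx
      choose j hjk hxj using hX x hx
      have hlt : ∀ i' : Fin n, (if Climb k X i' x then j i' - 1 else j i') < k := by
        intro i'
        split_ifs with h
        · have := hjk i'; omega
        · rcases lt_or_eq_of_le (hjk i') with h' | h'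
          · exact h'
          · exact absurd (climb_top hx (by rw [hxj i', h'])) h
      refine Finset.mem_image.2 ⟨fun i' => ⟨_, hlt i'⟩, Finset.mem_univ _, ?_⟩
      funext i'
      show ((if Climb k X i' x then j i' - 1 else j i' : ℕ) : ℝ)
        = x i' - (if Climb k X i' x then (1 : ℝ) else 0)
      split_ifs with h
      · have h1 : 1 ≤ j i' := by
          by_contra hh
          have hj0 : j i' = 0 := by omega
          exact hzero x hx i' (by rw [hxj i', hj0]; simp) h
        rw [Nat.cast_sub h1, hxj i']
        simp
      · rw [hxj i']; ring
    have hinj : Set.InjOn φ ↑X := by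
      intro x hxX y hyX hxy
      have hco : ∀ i' : Fin n, x i' - y i'
          = (if Climb k X i' x then (1 : ℝ) else 0)
            - (if Climb k X i' y then (1 : ℝ) else 0) := by
        intro i'
        have := congrFun hxy i'
        simp only [hφ] at this
        linarith
      have habs : ∀ i' : Fin n, |x i' - y i'| ≤ 1 := by
        intro i'
        rw [hco i']
        split_ifs <;> norm_num
      have hdxy : dist x y ≤ 1 := dist_le_of_forall _ _ zero_le_one habs
      funext i'
      have h := hco i'
      split_ifs at h with h1 h2 h2
      · linarith
      · exfalso
        exact h2 (climb_prepend hyX (by rw [dist_comm]; exact hdxy) (by linarith) h1)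
      · exfalso
        exact h1 (climb_prepend hxX hdxy (by linarith) h2)
      · linarith
    have hcard1 : X.card ≤ G'.card :=
      Finset.card_le_card_of_injOn φ hmaps hinj
    have hembinj : Function.Injective emb := by
      intro g h heq
      funext i'
      have := congrFun heq i'
      simp only [hemb] at this
      exact Fin.val_injective (Nat.cast_injective this)
    have hcard2 : G'.card = k ^ n := by
      rw [hG', Finset.card_image_of_injective _ hembinj, Finset.card_univ]
      simp
    omega
end

section
/- For all positive integers k and n, if the points of R^n are colored with fewer than ⌈((k+1)/k)^n⌉ colors, then some color class contains k+1 points x^0, ..., x^k with ‖x^s - x^t‖_∞ = |s - t| for all s, t; equivalently, the chromatic number χ(R^n_∞; B_k) is at least ((k+1)/k)^n. -/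
namespace BatonAux

/-- ℓ∞ distance on `Fin n → ℕ`. -/
def dd {n : ℕ} (u v : Fin n → ℕ) : ℕ :=
  Finset.univ.sup fun i => max (u i - v i) (v i - u i)

lemma coord_le_dd {n : ℕ} (u v : Fin n → ℕ) (i : Fin n) :
    max (u i - v i) (v i - u i) ≤ dd u v :=
  Finset.le_sup (f := fun i => max (u i - v i) (v i - u i)) (Finset.mem_univ i)

lemma dd_comm {n : ℕ} (u v : Fin n → ℕ) : dd u v = dd v u := by
  unfold dd
  exact Finset.sup_congr rfl fun i _ => max_comm _ _

lemma dd_self {n : ℕ} (u : Fin n → ℕ) : dd u u = 0 := by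
  unfold dd
  simp

lemma dd_triangle {n : ℕ} (u v w : Fin n → ℕ) : dd u w ≤ dd u v + dd v w := by
  refine Finset.sup_le fun i _ => ?_
  have h1 := coord_le_dd u v i
  have h2 := coord_le_dd v w i
  omega

lemma dd_cons {n : ℕ} (a b : ℕ) (u v : Fin n → ℕ) :
    dd (Fin.cons a u) (Fin.cons b v) = max (max (a - b) (b - a)) (dd u v) := by
  unfold dd
  rw [Fin.univ_succ, Finset.sup_cons, Finset.sup_map]
  simp only [Fin.cons_zero]
  congr 1

/-- `S` contains an isometric copy of the baton `B_k`. -/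
def HasBaton {n : ℕ} (S : Finset (Fin n → ℕ)) (k : ℕ) : Prop :=
  ∃ w : ℕ → (Fin n → ℕ), (∀ t, t ≤ k → w t ∈ S) ∧
    ∀ s t, s ≤ k → t ≤ k → dd (w s) (w t) = max (s - t) (t - s)

lemma hasBaton_mono {n k : ℕ} {S T : Finset (Fin n → ℕ)} (hST : S ⊆ T)
    (h : HasBaton S k) : HasBaton T k := by
  obtain ⟨w, hmem, hd⟩ := h
  exact ⟨w, fun t ht => hST (hmem t ht), hd⟩

/-- slice of `S` at first coordinate `t` -/
def slice {n : ℕ} (S : Finset (Fin (n+1) → ℕ)) (t : ℕ) : Finset (Fin n → ℕ) :=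
  (S.filter fun v => v 0 = t).image Fin.tail

lemma mem_slice {n : ℕ} {S : Finset (Fin (n+1) → ℕ)} {t : ℕ} {x : Fin n → ℕ} :
    x ∈ slice S t ↔ Fin.cons t x ∈ S := by
  constructor
  · rintro hx
    obtain ⟨v, hv, rfl⟩ := Finset.mem_image.1 hx
    obtain ⟨hvS, hv0⟩ := Finset.mem_filter.1 hv
    have : Fin.cons (t : ℕ) (Fin.tail v) = v := by
      rw [← hv0]
      exact Fin.cons_self_tail v
    rwa [this]
  · intro h
    refine Finset.mem_image.2 ⟨Fin.cons t x, Finset.mem_filter.2 ⟨h, ?_⟩, ?_⟩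
    · simp
    · exact Fin.tail_cons _ _

lemma slice_card {n : ℕ} (S : Finset (Fin (n+1) → ℕ)) (t : ℕ) :
    (slice S t).card = (S.filter fun v => v 0 = t).card := by
  refine Finset.card_image_of_injOn ?_
  intro u hu v hv huv
  have hu0 := (Finset.mem_filter.1 hu).2
  have hv0 := (Finset.mem_filter.1 hv).2
  have : Fin.cons (u 0) (Fin.tail u) = Fin.cons (v 0) (Fin.tail v) := by
    rw [hu0, hv0, huv]
  rw [Fin.cons_self_tail u, Fin.cons_self_tail v] at this
  exact this

lemma slice_bounded {n k : ℕ} {S : Finset (Fin (n+1) → ℕ)}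
    (hb : ∀ v ∈ S, ∀ i, v i ≤ k) {t : ℕ} :
    ∀ x ∈ slice S t, ∀ i, x i ≤ k := by
  intro x hx i
  obtain ⟨v, hv, rfl⟩ := Finset.mem_image.1 hx
  exact hb v (Finset.mem_filter.1 hv).1 _

lemma slice_noBaton {n k : ℕ} {S : Finset (Fin (n+1) → ℕ)}
    (hnb : ¬ HasBaton S k) (t : ℕ) : ¬ HasBaton (slice S t) k := by
  intro ⟨w, hmem, hd⟩
  refine hnb ⟨fun j => Fin.cons t (w j), fun j hj => mem_slice.1 (hmem j hj), ?_⟩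
  intro s s' hs hs'
  rw [dd_cons, hd s s' hs hs']
  simp

/-- separated union of baton-free sets is baton-free -/
lemma noBaton_union {n k : ℕ} {A B : Finset (Fin n → ℕ)}
    (hA : ¬ HasBaton A k) (hB : ¬ HasBaton B k)
    (hsep : ∀ a ∈ A, ∀ b ∈ B, ¬ (dd a b ≤ 1)) :
    ¬ HasBaton (A ∪ B) k := by
  intro ⟨w, hmem, hd⟩
  have hstep : ∀ j, j < k → dd (w j) (w (j+1)) = 1 := by
    intro j hj
    have := hd j (j+1) (by omega) (by omega)
    rw [this]; omega
  have key : ∀ (X Y : Finset (Fin n → ℕ)), (∀ a ∈ X, ∀ b ∈ Y, ¬ (dd a b ≤ 1)) →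
      (∀ j, j ≤ k → w j ∈ X ∪ Y) → w 0 ∈ X → ∀ j, j ≤ k → w j ∈ X := by
    intro X Y hXY hmem' h0
    intro j
    induction j with
    | zero => intro _; exact h0
    | succ j ih =>
      intro hjk
      have hwj : w j ∈ X := ih (by omega)
      rcases Finset.mem_union.1 (hmem' (j+1) hjk) with h | h
      · exact h
      · exact absurd (by rw [hstep j (by omega)]) (hXY (w j) hwj (w (j+1)) h)
  rcases Finset.mem_union.1 (hmem 0 (Nat.zero_le _)) with h0 | h0
  · exact hA ⟨w, key A B hsep hmem h0, hd⟩
  · have hsep' : ∀ a ∈ B, ∀ b ∈ A, ¬ (dd a b ≤ 1) := by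
      intro a ha b hb
      rw [dd_comm]
      exact hsep b hb a ha
    have hmem' : ∀ j, j ≤ k → w j ∈ B ∪ A := by
      intro j hj
      rcases Finset.mem_union.1 (hmem j hj) with h | h
      · exact Finset.mem_union.2 (Or.inr h)
      · exact Finset.mem_union.2 (Or.inl h)
    exact hB ⟨w, key B A hsep' hmem' h0, hd⟩

/-- reachability sets along the first coordinate -/
def reach {n : ℕ} (S : Finset (Fin (n+1) → ℕ)) : ℕ → Finset (Fin n → ℕ)
  | 0 => slice S 0
  | (t+1) => (slice S (t+1)).filter fun x => ∃ r ∈ reach S t, dd x r ≤ 1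

lemma reach_subset_slice {n : ℕ} (S : Finset (Fin (n+1) → ℕ)) (t : ℕ) :
    reach S t ⊆ slice S t := by
  cases t with
  | zero => exact Finset.Subset.refl _
  | succ t => exact Finset.filter_subset _ _

/-- if `reach S k` is nonempty, `S` has a baton -/
lemma baton_of_reach {n k : ℕ} (S : Finset (Fin (n+1) → ℕ))
    (hne : (reach S k).Nonempty) : HasBaton S k := by
  -- build a backward path
  have path : ∀ t, ∀ y ∈ reach S t, ∃ w : ℕ → (Fin n → ℕ),
      w t = y ∧ (∀ j, j ≤ t → w j ∈ reach S j) ∧ (∀ j, j < t → dd (w j) (w (j+1)) ≤ 1) := by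
    intro t
    induction t with
    | zero =>
      intro y hy
      exact ⟨fun _ => y, rfl, fun j hj => by interval_cases j; exact hy, fun j hj => by omega⟩
    | succ t ih =>
      intro y hy
      have hy' : y ∈ (slice S (t+1)).filter fun x => ∃ r ∈ reach S t, dd x r ≤ 1 := hy
      obtain ⟨hySl, r, hr, hdyr⟩ : y ∈ slice S (t+1) ∧ ∃ r ∈ reach S t, dd y r ≤ 1 := by
        have := Finset.mem_filter.1 hy'
        exact ⟨this.1, this.2⟩
      obtain ⟨w, hwt, hwmem, hwstep⟩ := ih r hr
      refine ⟨fun j => if j ≤ t then w j else y, ?_, ?_, ?_⟩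
      · simp
      · intro j hj
        by_cases h : j ≤ t
        · simpa [h] using hwmem j h
        · have : j = t + 1 := by omega
          simpa [this] using hy
      · intro j hj
        by_cases h : j + 1 ≤ t
        · simpa [h, Nat.le_of_succ_le h] using hwstep j (by omega)
        · have hjt : j = t := by omega
          subst hjt
          simp only [le_refl, if_pos, if_neg (by omega : ¬ (j + 1 ≤ j))]
          rw [dd_comm, hwt]
          exact hdyr
  obtain ⟨y, hy⟩ := hne
  obtain ⟨w, hwt, hwmem, hwstep⟩ := path k y hy
  -- chain Lipschitz bound
  have lip : ∀ s t, s ≤ t → t ≤ k → dd (w s) (w t) ≤ t - s := by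
    intro s t hst htk
    induction t with
    | zero =>
      have : s = 0 := by omega
      subst this; simp [dd_self]
    | succ t ih =>
      rcases Nat.lt_or_ge s (t+1) with h | h
      · have h1 : dd (w s) (w t) ≤ t - s := ih (by omega) (by omega)
        have h2 : dd (w t) (w (t+1)) ≤ 1 := hwstep t (by omega)
        have := dd_triangle (w s) (w t) (w (t+1))
        omega
      · have : s = t + 1 := by omega
        subst this; simp [dd_self]
  refine ⟨fun j => Fin.cons j (w j), ?_, ?_⟩
  · intro t ht
    exact mem_slice.1 (reach_subset_slice S t (hwmem t ht))
  · intro s t hs ht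
    rw [dd_cons]
    rcases le_total s t with h | h
    · have := lip s t h ht
      omega
    · have := lip t s h hs
      rw [dd_comm] at this
      omega

/-- The grid lemma: a baton-free subset of `{0..k}^n` has at most `k^n` elements. -/
theorem grid_lemma (k : ℕ) : ∀ (n : ℕ) (S : Finset (Fin n → ℕ)),
    (∀ v ∈ S, ∀ i, v i ≤ k) → ¬ HasBaton S k → S.card ≤ k ^ n := by
  intro n
  induction n with
  | zero =>
    intro S _ _
    have : S.card ≤ 1 := Finset.card_le_one.2 fun a _ b _ => Subsingleton.elim a b
    simpa using this
  | succ n ih =>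
    intro S hb hnb
    set K := k ^ n with hK
    -- step inequality
    have step : ∀ t, (slice S (t+1)).card + (reach S t).card ≤ K + (reach S (t+1)).card := by
      intro t
      set A := (slice S (t+1)).filter (fun x => ¬ ∃ r ∈ reach S t, dd x r ≤ 1) with hA
      have hsplit : (reach S (t+1)).card + A.card = (slice S (t+1)).card := by
        rw [hA]
        exact Finset.card_filter_add_card_filter_not _
      have hdisj : Disjoint A (reach S t) := by
        rw [Finset.disjoint_left]
        intro x hx hx'
        exact (Finset.mem_filter.1 hx).2 ⟨x, hx', by rw [dd_self]; omega⟩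
      have hsep : ∀ a ∈ A, ∀ b ∈ reach S t, ¬ (dd a b ≤ 1) := by
        intro a ha b hbmem hab
        exact (Finset.mem_filter.1 ha).2 ⟨b, hbmem, hab⟩
      have hAfree : ¬ HasBaton A k :=
        fun h => slice_noBaton hnb (t+1)
          (hasBaton_mono (Finset.filter_subset _ _) h)
      have hRfree : ¬ HasBaton (reach S t) k :=
        fun h => slice_noBaton hnb t (hasBaton_mono (reach_subset_slice S t) h)
      have hUfree : ¬ HasBaton (A ∪ reach S t) k := noBaton_union hAfree hRfree hsep
      have hUbound : ∀ v ∈ A ∪ reach S t, ∀ i, v i ≤ k := by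
        intro v hv
        rcases Finset.mem_union.1 hv with h | h
        · exact slice_bounded hb v (Finset.filter_subset _ _ h)
        · exact slice_bounded hb v (reach_subset_slice S t h)
      have hcard : A.card + (reach S t).card ≤ K := by
        rw [← Finset.card_union_of_disjoint hdisj]
        exact ih _ hUbound hUfree
      omega
    -- invariant
    have inv : ∀ t, (∑ j ∈ Finset.range (t+1), (slice S j).card) ≤ t * K + (reach S t).card := by
      intro t
      induction t with
      | zero => simp [reach]
      | succ t iht =>
        rw [Finset.sum_range_succ]
        have hst := step t
        have hm : (t+1) * K = t * K + K := by ring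
        omega
    -- reach S k is empty
    have hreach : (reach S k).card = 0 := by
      rw [Finset.card_eq_zero]
      by_contra h
      exact hnb (baton_of_reach S (Finset.nonempty_of_ne_empty h))
    -- total count
    have htotal : S.card = ∑ j ∈ Finset.range (k+1), (slice S j).card := by
      have : S.card = ∑ j ∈ Finset.range (k+1), (S.filter fun v => v 0 = j).card := by
        refine Finset.card_eq_sum_card_fiberwise ?_
        intro v hv
        exact Finset.mem_range.2 (Nat.lt_succ_of_le (hb v hv 0))
      rw [this]
      exact Finset.sum_congr rfl fun j _ => (slice_card S j).symm
    have := inv k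
    rw [← htotal] at this
    rw [hreach] at this
    calc S.card ≤ k * K := by omega
    _ = k ^ (n+1) := by rw [hK]; ring

lemma cast_max_sub (a b : ℕ) : ((max (a - b) (b - a) : ℕ) : ℝ) = |(a : ℝ) - (b : ℝ)| := by
  rcases le_total a b with h | h
  · have hc : (a : ℝ) ≤ (b : ℝ) := Nat.cast_le.2 h
    rw [Nat.sub_eq_zero_of_le h, max_eq_right (Nat.zero_le _), abs_sub_comm,
      abs_of_nonneg (sub_nonneg.2 hc), Nat.cast_sub h]
  · have hc : (b : ℝ) ≤ (a : ℝ) := Nat.cast_le.2 h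
    rw [Nat.sub_eq_zero_of_le h, max_eq_left (Nat.zero_le _),
      abs_of_nonneg (sub_nonneg.2 hc), Nat.cast_sub h]

end BatonAux

/-- If `ℝ^n` with the max metric is colored with fewer than `((k+1)/k)^n` colors,
then there is a monochromatic isometric copy of the baton `B_k`; i.e.
`χ(ℝ^n_∞; B_k) ≥ ((k+1)/k)^n`. -/
theorem stmt_1 (k n : ℕ) (hk : 0 < k) (hn : 0 < n) (N : ℕ)
    (hN : (N : ℝ) < (((k : ℝ) + 1) / (k : ℝ)) ^ n)
    (c : (Fin n → ℝ) → Fin N) :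
    ∃ x : Fin (k + 1) → (Fin n → ℝ),
      (∀ s t : Fin (k + 1), c (x s) = c (x t)) ∧
      ∀ s t : Fin (k + 1), dist (x s) (x t) = |(s : ℝ) - (t : ℝ)| := by
  classical
  open BatonAux in
  -- the integer grid
  have hkR : (0 : ℝ) < (k : ℝ) := by exact_mod_cast hk
  have hmul : N * k ^ n < (k + 1) ^ n := by
    have h1 : (N : ℝ) * (k : ℝ) ^ n < ((k : ℝ) + 1) ^ n := by
      have := mul_lt_mul_of_pos_right hN (pow_pos hkR n)
      rwa [div_pow, div_mul_cancel₀] at this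
      exact ne_of_gt (pow_pos hkR n)
    exact_mod_cast h1
  set G : Finset (Fin n → ℕ) :=
    Finset.univ.image (fun v : Fin n → Fin (k+1) => fun i => (v i : ℕ)) with hG
  have hGcard : G.card = (k+1) ^ n := by
    rw [hG, Finset.card_image_of_injective _ ?_, Finset.card_univ]
    · simp [Fintype.card_fun]
    · intro u v huv
      funext i
      have : ((u i : ℕ)) = ((v i : ℕ)) := congrFun huv i
      exact Fin.ext this
  have hGbound : ∀ v ∈ G, ∀ i, v i ≤ k := by
    intro v hv i
    obtain ⟨u, _, rfl⟩ := Finset.mem_image.1 hv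
    exact Nat.lt_succ_iff.1 (u i).isLt
  set F : (Fin n → ℕ) → Fin N := fun v => c (fun i => (v i : ℝ)) with hF
  obtain ⟨b, _, hbcard⟩ := Finset.exists_lt_card_fiber_of_mul_lt_card_of_maps_to
    (t := (Finset.univ : Finset (Fin N))) (f := F) (fun a _ => Finset.mem_univ _)
    (by rw [hGcard, Finset.card_univ, Fintype.card_fin]; exact hmul)
  set S := G.filter (fun v => F v = b) with hS
  have hSbound : ∀ v ∈ S, ∀ i, v i ≤ k := fun v hv => hGbound v (Finset.filter_subset _ _ hv)
  have hbaton : HasBaton S k := by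
    by_contra h
    have := grid_lemma k n S hSbound h
    omega
  obtain ⟨w, hwmem, hwd⟩ := hbaton
  refine ⟨fun s => fun i => ((w (s : ℕ) i : ℕ) : ℝ), ?_, ?_⟩
  · intro s t
    have hs : F (w (s : ℕ)) = b := (Finset.mem_filter.1 (hwmem _ (Nat.lt_succ_iff.1 s.isLt))).2
    have ht : F (w (t : ℕ)) = b := (Finset.mem_filter.1 (hwmem _ (Nat.lt_succ_iff.1 t.isLt))).2
    rw [hF] at hs ht
    simpa using hs.trans ht.symm
  · intro s t
    have hsk : (s : ℕ) ≤ k := Nat.lt_succ_iff.1 s.isLt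
    have htk : (t : ℕ) ≤ k := Nat.lt_succ_iff.1 t.isLt
    have hd := hwd (s : ℕ) (t : ℕ) hsk htk
    have habs : ((max ((s : ℕ) - (t : ℕ)) ((t : ℕ) - (s : ℕ)) : ℕ) : ℝ)
        = |(s : ℝ) - (t : ℝ)| := cast_max_sub _ _
    refine le_antisymm ?_ ?_
    · refine (dist_pi_le_iff (abs_nonneg _)).2 fun i => ?_
      rw [Real.dist_eq, ← cast_max_sub]
      rw [← habs]
      have : max (w (s:ℕ) i - w (t:ℕ) i) (w (t:ℕ) i - w (s:ℕ) i)
          ≤ max ((s : ℕ) - (t : ℕ)) ((t : ℕ) - (s : ℕ)) := by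
        have := coord_le_dd (w (s:ℕ)) (w (t:ℕ)) i
        rw [hd] at this
        exact this
      exact_mod_cast this
    · obtain ⟨i, _, hi⟩ := Finset.exists_mem_eq_sup (Finset.univ : Finset (Fin n))
        ⟨⟨0, hn⟩, Finset.mem_univ _⟩
        (fun i => max (w (s:ℕ) i - w (t:ℕ) i) (w (t:ℕ) i - w (s:ℕ) i))
      have hdd : dd (w (s:ℕ)) (w (t:ℕ))
          = max (w (s:ℕ) i - w (t:ℕ) i) (w (t:ℕ) i - w (s:ℕ) i) := hi
      rw [hd] at hdd
      calc |(s : ℝ) - (t : ℝ)| = ((max ((s:ℕ) - (t:ℕ)) ((t:ℕ) - (s:ℕ)) : ℕ) : ℝ) := habs.symm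
      _ = ((max (w (s:ℕ) i - w (t:ℕ) i) (w (t:ℕ) i - w (s:ℕ) i) : ℕ) : ℝ) := by rw [hdd]
      _ = |((w (s:ℕ) i : ℕ) : ℝ) - ((w (t:ℕ) i : ℕ) : ℝ)| := cast_max_sub _ _
      _ = dist (((w (s:ℕ) i : ℕ) : ℝ)) (((w (t:ℕ) i : ℕ) : ℝ)) := (Real.dist_eq _ _).symm
      _ ≤ _ := dist_le_pi_dist (fun j => ((w (s:ℕ) j : ℕ) : ℝ)) (fun j => ((w (t:ℕ) j : ℕ) : ℝ)) i
end

section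
/- For every positive integer n, χ(R^n_∞) = 2^n, where χ(R^n_∞) is the minimum number of colors needed to color R^n so that no two points at Chebyshev distance exactly 1 receive the same color. -/
lemma chebyshev_coord {n : ℕ} (hn : 0 < n) (x y : Fin n → ℝ) (h : dist x y = 1) :
    ∃ i, dist (x i) (y i) = 1 := by
  have hd : dist x y = ((Finset.univ.sup fun i => nndist (x i) (y i) : NNReal) : ℝ) :=
    dist_pi_def x y
  obtain ⟨i0⟩ := Fin.pos_iff_nonempty.mp hn
  obtain ⟨i, -, hi⟩ := Finset.exists_mem_eq_sup Finset.univ ⟨i0, Finset.mem_univ i0⟩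
    (fun i => nndist (x i) (y i))
  exact ⟨i, by rw [← h, hd, hi]; rfl⟩

lemma floor_parity {a b : ℝ} (h : dist a b = 1) : Even ⌊a⌋ ↔ ¬ Even ⌊b⌋ := by
  rw [Real.dist_eq, abs_eq (by norm_num : (0:ℝ) ≤ 1)] at h
  rcases h with h | h
  · have : a = b + 1 := by linarith
    rw [this, Int.floor_add_one, Int.even_add_one]
  · have : b = a + 1 := by linarith
    simp [this, Int.floor_add_one, Int.even_add_one]

/-- `χ(ℝ^n_∞) = 2^n`: `2^n` is the least number of colors with which `ℝ^n`
(max metric) can be colored so that no two points at Chebyshev distance exactly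
`1` receive the same color. -/
theorem stmt_4 (n : ℕ) (hn : 0 < n) :
    IsLeast {N : ℕ | ∃ c : (Fin n → ℝ) → Fin N,
      ∀ x y : Fin n → ℝ, dist x y = 1 → c x ≠ c y} (2 ^ n) := by
  constructor
  · -- a proper coloring with 2^n colors
    refine ⟨fun x => finFunctionFinEquiv (fun i => if Even ⌊x i⌋ then 0 else 1), ?_⟩
    intro x y hxy hc
    obtain ⟨i, hi⟩ := chebyshev_coord hn x y hxy
    have := congrFun (finFunctionFinEquiv.injective hc) i
    have hp := floor_parity hi
    by_cases h : Even ⌊x i⌋ <;> by_cases h' : Even ⌊y i⌋ <;>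
      simp [h, h'] at this hp ⊢ <;> tauto
  · -- lower bound
    rintro N ⟨c, hc⟩
    set f : Fin (2 ^ n) → Fin N :=
      fun k => c (fun i => ((finFunctionFinEquiv.symm k i : ℕ) : ℝ)) with hf
    have hinj : Function.Injective f := by
      intro k k' hkk'
      by_contra hne
      set v := finFunctionFinEquiv.symm k with hv
      set w := finFunctionFinEquiv.symm k' with hw
      have hvw : v ≠ w := fun h => hne (finFunctionFinEquiv.symm.injective h)
      obtain ⟨j, hj⟩ := Function.ne_iff.mp hvw
      have hdist : dist (fun i => ((v i : ℕ) : ℝ)) (fun i => ((w i : ℕ) : ℝ)) = 1 := by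
        apply le_antisymm
        · rw [dist_pi_le_iff (by norm_num : (0:ℝ) ≤ 1)]
          intro i
          have h1 := (v i).isLt
          have h2 := (w i).isLt
          rw [Real.dist_eq, abs_sub_le_iff]
          constructor <;>
          · have : ((v i : ℕ) : ℝ) ≤ 1 := by exact_mod_cast Nat.lt_succ_iff.mp h1
            have : ((w i : ℕ) : ℝ) ≤ 1 := by exact_mod_cast Nat.lt_succ_iff.mp h2
            have : (0:ℝ) ≤ ((v i : ℕ) : ℝ) := Nat.cast_nonneg _
            have : (0:ℝ) ≤ ((w i : ℕ) : ℝ) := Nat.cast_nonneg _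
            linarith [Nat.cast_nonneg (α := ℝ) (v i : ℕ), Nat.cast_nonneg (α := ℝ) (w i : ℕ),
              show ((v i : ℕ) : ℝ) ≤ 1 from by exact_mod_cast Nat.lt_succ_iff.mp h1,
              show ((w i : ℕ) : ℝ) ≤ 1 from by exact_mod_cast Nat.lt_succ_iff.mp h2]
        · calc (1:ℝ) = dist ((v j : ℕ) : ℝ) ((w j : ℕ) : ℝ) := by
                have h1 := (v j).isLt
                have h2 := (w j).isLt
                have hne' : (v j : ℕ) ≠ (w j : ℕ) := fun h => hj (Fin.val_injective h)
                rw [Real.dist_eq]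
                rcases Nat.lt_or_ge (v j : ℕ) (w j : ℕ) with h | h
                · have : (v j : ℕ) = 0 ∧ (w j : ℕ) = 1 := by omega
                  rw [this.1, this.2]; norm_num
                · have : (w j : ℕ) = 0 ∧ (v j : ℕ) = 1 := by omega
                  rw [this.1, this.2]; norm_num
            _ ≤ _ := dist_le_pi_dist (fun i => ((v i : ℕ) : ℝ)) (fun i => ((w i : ℕ) : ℝ)) j
      exact hc _ _ hdist (by exact hkk')
    calc 2 ^ n = Fintype.card (Fin (2 ^ n)) := by simp
      _ ≤ Fintype.card (Fin N) := Fintype.card_le_of_injective f hinj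
      _ = N := by simp
end

section
/- Let α > 1 be a real number and m = ⌈α⌉. Define a_0 = 0, a_l = 1 + ((l-1)/(m-1))(α-1) for 1 ≤ l ≤ m, and a_{m+1} = α + 1, and let A = {a_0, ..., a_{m+1}} ⊂ R. Then for every positive integer n, every subset B ⊆ A^n with |B| > (m+1)^n contains three points u, v, w with ‖u-v‖_∞ = 1, ‖v-w‖_∞ = α, and ‖u-w‖_∞ = α + 1 (i.e., an isometric copy of the baton B(1,α) = {0, 1, 1+α} in the max metric). -/
lemma my_dist_snoc {n : ℕ} (p q : Fin n → ℝ) (s t : ℝ) :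
    dist (Fin.snoc p s : Fin (n+1) → ℝ) (Fin.snoc q t) = max (dist p q) (dist s t) := by
  apply le_antisymm
  · rw [dist_pi_le_iff (le_max_of_le_left dist_nonneg)]
    intro i
    induction i using Fin.lastCases with
    | last =>
        simp only [Fin.snoc_last]
        exact le_max_right _ _
    | cast j =>
        simp only [Fin.snoc_castSucc]
        exact le_trans (dist_le_pi_dist p q j) (le_max_left _ _)
  · apply max_le
    · rw [dist_pi_le_iff dist_nonneg]
      intro j
      have h := dist_le_pi_dist (Fin.snoc p s : Fin (n+1) → ℝ) (Fin.snoc q t) j.castSucc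
      simpa only [Fin.snoc_castSucc] using h
    · have h := dist_le_pi_dist (Fin.snoc p s : Fin (n+1) → ℝ) (Fin.snoc q t) (Fin.last n)
      simpa only [Fin.snoc_last] using h

lemma baton_core (α : ℝ) (hα : 1 < α) (m : ℕ) (hm2 : 2 ≤ m)
    (a : ℕ → ℝ) (ha0 : a 0 = 0) (ha1 : a 1 = 1) (haM : a (m+1) = α+1)
    (hmono : ∀ k l : ℕ, k < l → l ≤ m+1 → a k < a l)
    (hrange : ∀ l : ℕ, l ≤ m+1 → 0 ≤ a l ∧ a l ≤ α+1) :
    ∀ n : ℕ, ∀ B : Finset (Fin n → ℝ),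
      (∀ x ∈ B, ∀ i, ∃ l : ℕ, l ≤ m+1 ∧ x i = a l) →
      (¬ ∃ u ∈ B, ∃ v ∈ B, ∃ w ∈ B, dist u v = 1 ∧ dist v w = α ∧ dist u w = α+1) →
      B.card ≤ (m+1)^n := by
  have hα0 : (0:ℝ) ≤ α := by linarith
  have hα1 : (1:ℝ) ≤ α := by linarith
  intro n
  induction n with
  | zero =>
    intro B hB hfree
    simpa using Finset.card_le_one.mpr (fun x _ y _ => funext fun i => i.elim0)
  | succ n ih =>
    intro B hB hfree
    classical
    obtain ⟨m'', rfl⟩ : ∃ m'', m = m'' + 2 := ⟨m - 2, by omega⟩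
    set m : ℕ := m'' + 2 with hmdef
    set L := Fin.last n with hL
    set S : ℕ → Finset (Fin n → ℝ) :=
      fun l => (B.filter (fun x => x L = a l)).image Fin.init with hS
    have hmemS : ∀ (l : ℕ) (y : Fin n → ℝ),
        y ∈ S l ↔ (Fin.snoc y (a l) : Fin (n+1) → ℝ) ∈ B := by
      intro l y
      constructor
      · intro hy
        simp only [hS, Finset.mem_image, Finset.mem_filter] at hy
        obtain ⟨x, ⟨hxB, hxL⟩, hxy⟩ := hy
        have hxx : (Fin.snoc y (a l) : Fin (n+1) → ℝ) = x := by
          rw [← hxy, ← hxL]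
          exact Fin.snoc_init_self x
        rwa [hxx]
      · intro h
        simp only [hS, Finset.mem_image, Finset.mem_filter]
        refine ⟨Fin.snoc y (a l), ⟨h, ?_⟩, ?_⟩
        · rw [hL]; simp
        · simp
    have hgrid : ∀ (l : ℕ), ∀ y ∈ S l, ∀ i : Fin n, ∃ l' : ℕ, l' ≤ m+1 ∧ y i = a l' := by
      intro l y hy i
      have hB' := hB _ ((hmemS l y).mp hy) i.castSucc
      simpa only [Fin.snoc_castSucc] using hB'
    -- the lifting gadget
    have lift : ∀ (p q r : Fin n → ℝ) (s t v : ℕ), s ≤ m+1 → t ≤ m+1 → v ≤ m+1 →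
        (Fin.snoc p (a s) : Fin (n+1) → ℝ) ∈ B → (Fin.snoc q (a t) : Fin (n+1) → ℝ) ∈ B →
        (Fin.snoc r (a v) : Fin (n+1) → ℝ) ∈ B →
        dist p q = 1 → dist q r = α → dist p r = α + 1 →
        |a s - a t| ≤ 1 → |a t - a v| ≤ α → False := by
      intro p q r s t v hs ht hv hpB hqB hrB d1 d2 d3 e1 e2
      apply hfree
      refine ⟨_, hpB, _, hqB, _, hrB, ?_, ?_, ?_⟩
      · rw [my_dist_snoc, d1, Real.dist_eq]
        exact max_eq_left e1
      · rw [my_dist_snoc, d2, Real.dist_eq]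
        exact max_eq_left e2
      · rw [my_dist_snoc, d3, Real.dist_eq]
        have h1 := hrange s hs
        have h2 := hrange v hv
        apply max_eq_left
        rw [abs_sub_le_iff]
        constructor <;> linarith [h1.1, h1.2, h2.1, h2.2]
    -- the vertical gadget
    have vert : ∀ (p q : Fin n → ℝ),
        (Fin.snoc p (a 0) : Fin (n+1) → ℝ) ∈ B → (Fin.snoc p (a 1) : Fin (n+1) → ℝ) ∈ B →
        (Fin.snoc q (a (m+1)) : Fin (n+1) → ℝ) ∈ B → dist p q ≤ α → False := by
      intro p q h0 h1 hM hpq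
      apply hfree
      refine ⟨_, h0, _, h1, _, hM, ?_, ?_, ?_⟩
      · rw [my_dist_snoc, dist_self, Real.dist_eq, ha0, ha1]
        norm_num
      · rw [my_dist_snoc, Real.dist_eq, ha1, haM]
        have e : |(1:ℝ) - (α+1)| = α := by
          have : (1:ℝ) - (α+1) = -α := by ring
          rw [this, abs_neg, abs_of_nonneg hα0]
        rw [e]
        exact max_eq_right hpq
      · rw [my_dist_snoc, Real.dist_eq, ha0, haM]
        have e : |(0:ℝ) - (α+1)| = α + 1 := by
          have : (0:ℝ) - (α+1) = -(α+1) := by ring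
          rw [this, abs_neg, abs_of_nonneg (by linarith)]
        rw [e]
        exact max_eq_right (by linarith)
    -- slices are baton-free
    have sliceFree : ∀ l : ℕ, l ≤ m+1 → (S l).card ≤ (m+1)^n := by
      intro l hl
      apply ih _ (hgrid l)
      rintro ⟨p, hp, q, hq, r, hr, d1, d2, d3⟩
      refine lift p q r l l l hl hl hl ((hmemS _ _).mp hp) ((hmemS _ _).mp hq)
        ((hmemS _ _).mp hr) d1 d2 d3 ?_ ?_
      · simp
      · simpa using hα0
    -- X = S 0 ∪ S 1 is baton-free
    have hb01 : ∀ s : ℕ, s ≤ 1 → 0 ≤ a s ∧ a s ≤ 1 := by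
      intro s hs
      rcases Nat.le_one_iff_eq_zero_or_eq_one.mp hs with rfl | rfl
      · rw [ha0]; norm_num
      · rw [ha1]; norm_num
    have mem01 : ∀ y ∈ S 0 ∪ S 1, ∃ s : ℕ, s ≤ 1 ∧ (Fin.snoc y (a s) : Fin (n+1) → ℝ) ∈ B := by
      intro y hy
      rcases Finset.mem_union.mp hy with h | h
      · exact ⟨0, by omega, (hmemS 0 y).mp h⟩
      · exact ⟨1, by omega, (hmemS 1 y).mp h⟩
    have XFree : (S 0 ∪ S 1).card ≤ (m+1)^n := by
      apply ih
      · intro y hy i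
        rcases Finset.mem_union.mp hy with h | h
        · exact hgrid 0 y h i
        · exact hgrid 1 y h i
      · rintro ⟨p, hp, q, hq, r, hr, d1, d2, d3⟩
        obtain ⟨s, hs, hpB⟩ := mem01 p hp
        obtain ⟨t, ht, hqB⟩ := mem01 q hq
        obtain ⟨v, hv, hrB⟩ := mem01 r hr
        have bs := hb01 s hs
        have bt := hb01 t ht
        have bv := hb01 v hv
        refine lift p q r s t v (by omega) (by omega) (by omega) hpB hqB hrB d1 d2 d3 ?_ ?_
        · rw [abs_sub_le_iff]; constructor <;> linarith [bs.1, bs.2, bt.1, bt.2]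
        · rw [abs_sub_le_iff]; constructor <;> linarith [bt.1, bt.2, bv.1, bv.2]
    -- C = (S 0 ∩ S 1) ∪ S (m+1) is baton-free
    have habsM1 : |a 1 - a (m+1)| ≤ α := by
      rw [ha1, haM]
      have e : (1:ℝ) - (α+1) = -α := by ring
      rw [e, abs_neg, abs_of_nonneg hα0]
    have habs1M : |a (m+1) - a 1| ≤ α := by
      rw [abs_sub_comm]; exact habsM1
    have CFree : ((S 0 ∩ S 1) ∪ S (m+1)).card ≤ (m+1)^n := by
      apply ih
      · intro y hy i
        rcases Finset.mem_union.mp hy with h | h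
        · exact hgrid 0 y (Finset.mem_inter.mp h).1 i
        · exact hgrid (m+1) y h i
      · rintro ⟨p, hp, q, hq, r, hr, d1, d2, d3⟩
        rcases Finset.mem_union.mp hq with hqD | hqM
        · -- q has both a 0 and a 1 in its fiber
          have hq0 := (hmemS 0 q).mp (Finset.mem_inter.mp hqD).1
          have hq1 := (hmemS 1 q).mp (Finset.mem_inter.mp hqD).2
          rcases Finset.mem_union.mp hp with hpD | hpM
          · -- p too : lift with s = 1, t = 1
            have hp1 := (hmemS 1 p).mp (Finset.mem_inter.mp hpD).2
            rcases Finset.mem_union.mp hr with hrD | hrM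
            · have hr1 := (hmemS 1 r).mp (Finset.mem_inter.mp hrD).2
              refine lift p q r 1 1 1 (by omega) (by omega) (by omega) hp1 hq1 hr1
                d1 d2 d3 (by simp) (by simpa using hα0)
            · have hrM' := (hmemS (m+1) r).mp hrM
              refine lift p q r 1 1 (m+1) (by omega) (by omega) (by omega) hp1 hq1 hrM'
                d1 d2 d3 (by simp) habsM1
          · -- p ∈ S (m+1) : vertical gadget based at q
            have hpM' := (hmemS (m+1) p).mp hpM
            exact vert q p hq0 hq1 hpM' (by rw [dist_comm, d1]; linarith)
        · -- q ∈ S (m+1)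
          have hqM' := (hmemS (m+1) q).mp hqM
          rcases Finset.mem_union.mp hp with hpD | hpM
          · -- p has both a 0 and a 1 : vertical gadget based at p
            have hp0 := (hmemS 0 p).mp (Finset.mem_inter.mp hpD).1
            have hp1 := (hmemS 1 p).mp (Finset.mem_inter.mp hpD).2
            exact vert p q hp0 hp1 hqM' (by rw [d1]; linarith)
          · -- p ∈ S (m+1) : lift with s = t = m+1
            have hpM' := (hmemS (m+1) p).mp hpM
            rcases Finset.mem_union.mp hr with hrD | hrM
            · have hr1 := (hmemS 1 r).mp (Finset.mem_inter.mp hrD).2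
              refine lift p q r (m+1) (m+1) 1 (by omega) (by omega) (by omega) hpM' hqM' hr1
                d1 d2 d3 (by simp) habs1M
            · have hrM' := (hmemS (m+1) r).mp hrM
              refine lift p q r (m+1) (m+1) (m+1) (by omega) (by omega) (by omega) hpM' hqM' hrM'
                d1 d2 d3 (by simp) (by simpa using hα0)
    -- disjointness
    have hdisj : Disjoint (S 0 ∩ S 1) (S (m+1)) := by
      rw [Finset.disjoint_left]
      intro y hyD hyM
      exact vert y y ((hmemS 0 y).mp (Finset.mem_inter.mp hyD).1)
        ((hmemS 1 y).mp (Finset.mem_inter.mp hyD).2)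
        ((hmemS (m+1) y).mp hyM) (by rw [dist_self]; exact hα0)
    -- counting
    have hainj : ∀ x ∈ Finset.range (m+2), ∀ y ∈ Finset.range (m+2), a x = a y → x = y := by
      intro x hx y hy he
      have hx' := Finset.mem_range.mp hx
      have hy' := Finset.mem_range.mp hy
      by_contra hne
      rcases Nat.lt_or_ge x y with h | h
      · exact (hmono x y h (by omega)).ne he
      · exact (hmono y x (by omega) (by omega)).ne he.symm
    have hinj : ∀ l : ℕ, (B.filter (fun x => x L = a l)).card = (S l).card := by
      intro l
      rw [hS]
      refine (Finset.card_image_of_injOn ?_).symm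
      intro x1 h1 x2 h2 he
      simp only [Finset.mem_coe, Finset.mem_filter] at h1 h2
      have e1 : x1 = Fin.snoc (Fin.init x1) (x1 L) := by
        rw [hL]; exact (Fin.snoc_init_self x1).symm
      have e2 : x2 = Fin.snoc (Fin.init x2) (x2 L) := by
        rw [hL]; exact (Fin.snoc_init_self x2).symm
      rw [e1, e2, he, h1.2, h2.2]
    have hcount : B.card = ∑ l ∈ Finset.range (m+2), (S l).card := by
      have h1 : B.card = ∑ v ∈ (Finset.range (m+2)).image a,
          (B.filter (fun x => x L = v)).card := by
        apply Finset.card_eq_sum_card_fiberwise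
        intro x hx
        obtain ⟨l, hl, hxl⟩ := hB x hx L
        exact Finset.mem_image.mpr ⟨l, Finset.mem_range.mpr (by omega), hxl.symm⟩
      rw [h1, Finset.sum_image hainj]
      exact Finset.sum_congr rfl (fun l _ => hinj l)
    -- splitting the sum
    have hsplit : Finset.range (m+2) = insert 0 (insert 1 (insert (m+1) (Finset.Icc 2 m))) := by
      ext x
      simp only [Finset.mem_range, Finset.mem_insert, Finset.mem_Icc]
      omega
    have h0not : (0:ℕ) ∉ insert 1 (insert (m+1) (Finset.Icc 2 m)) := by
      simp only [Finset.mem_insert, Finset.mem_Icc]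
      omega
    have h1not : (1:ℕ) ∉ insert (m+1) (Finset.Icc 2 m) := by
      simp only [Finset.mem_insert, Finset.mem_Icc]
      omega
    have hMnot : (m+1) ∉ Finset.Icc 2 m := by
      simp only [Finset.mem_Icc]
      omega
    have hIccSum : ∑ l ∈ Finset.Icc 2 m, (S l).card ≤ (m'' + 1) * (m+1)^n := by
      have h := Finset.sum_le_card_nsmul (Finset.Icc 2 m) (fun l => (S l).card) ((m+1)^n)
        (fun l hl => sliceFree l (by
          have := Finset.mem_Icc.mp hl
          omega))
      rw [Nat.card_Icc] at h
      have e : m + 1 - 2 = m'' + 1 := by omega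
      rw [e] at h
      simpa [smul_eq_mul] using h
    have hbundle : (S 0).card + (S 1).card + (S (m+1)).card ≤ 2 * (m+1)^n := by
      have h1 : (S 0 ∪ S 1).card + (S 0 ∩ S 1).card = (S 0).card + (S 1).card :=
        Finset.card_union_add_card_inter _ _
      have h2 : ((S 0 ∩ S 1) ∪ S (m+1)).card = (S 0 ∩ S 1).card + (S (m+1)).card :=
        Finset.card_union_of_disjoint hdisj
      calc (S 0).card + (S 1).card + (S (m+1)).card
          = (S 0 ∪ S 1).card + ((S 0 ∩ S 1).card + (S (m+1)).card) := by omega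
        _ = (S 0 ∪ S 1).card + ((S 0 ∩ S 1) ∪ S (m+1)).card := by rw [h2]
        _ ≤ (m+1)^n + (m+1)^n := Nat.add_le_add XFree CFree
        _ = 2 * (m+1)^n := by ring
    -- final assembly
    rw [hcount, hsplit, Finset.sum_insert h0not, Finset.sum_insert h1not,
      Finset.sum_insert hMnot]
    have efin : (m+1)^(n+1) = (m+1) * (m+1)^n := by
      rw [pow_succ]; ring
    calc (S 0).card + ((S 1).card + ((S (m+1)).card + ∑ l ∈ Finset.Icc 2 m, (S l).card))
        = ((S 0).card + (S 1).card + (S (m+1)).card) + ∑ l ∈ Finset.Icc 2 m, (S l).card := by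
          omega
      _ ≤ 2 * (m+1)^n + (m'' + 1) * (m+1)^n := Nat.add_le_add hbundle hIccSum
      _ = (m+1) * (m+1)^n := by rw [hmdef]; ring
      _ = (m+1)^(n+1) := efin.symm

/-- Theorem on `B(1,α)`: with `m = ⌈α⌉` and the explicit set
`A = {a_0, …, a_{m+1}}`, every `B ⊆ A^n` with `|B| > (m+1)^n` contains an
isometric copy of the baton `{0, 1, 1+α}` in the Chebyshev metric. -/
theorem stmt_5 (α : ℝ) (hα : 1 < α) (m : ℕ) (hm : m = ⌈α⌉₊)
    (a : ℕ → ℝ)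
    (ha0 : a 0 = 0)
    (ha : ∀ l : ℕ, 1 ≤ l → l ≤ m → a l = 1 + (((l : ℝ) - 1) / ((m : ℝ) - 1)) * (α - 1))
    (ham1 : a (m + 1) = α + 1)
    (n : ℕ) (hn : 0 < n)
    (B : Finset (Fin n → ℝ))
    (hB : ∀ x ∈ B, ∀ i : Fin n, ∃ l : ℕ, l ≤ m + 1 ∧ x i = a l)
    (hcard : B.card > (m + 1) ^ n) :
    ∃ u ∈ B, ∃ v ∈ B, ∃ w ∈ B,
      dist u v = 1 ∧ dist v w = α ∧ dist u w = α + 1 := by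
  have hm2 : 2 ≤ m := by
    rw [hm]
    have : 1 < ⌈α⌉₊ := by
      rw [Nat.lt_ceil]
      exact_mod_cast hα
    omega
  have hαm : α ≤ (m : ℝ) := by
    rw [hm]; exact Nat.le_ceil α
  have hm1 : (0:ℝ) < (m:ℝ) - 1 := by
    have h2 : (2:ℝ) ≤ (m:ℝ) := by exact_mod_cast hm2
    linarith
  have ha1 : a 1 = 1 := by
    rw [ha 1 le_rfl (by omega)]
    norm_num
  -- bounds for the interior points
  have hbnd : ∀ l : ℕ, 1 ≤ l → l ≤ m → 1 ≤ a l ∧ a l ≤ α := by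
    intro l h1 h2
    rw [ha l h1 h2]
    have c1 : (0:ℝ) ≤ (l:ℝ) - 1 := by
      have : (1:ℝ) ≤ (l:ℝ) := by exact_mod_cast h1
      linarith
    have c2 : (l:ℝ) - 1 ≤ (m:ℝ) - 1 := by
      have : (l:ℝ) ≤ (m:ℝ) := by exact_mod_cast h2
      linarith
    have q1 : 0 ≤ ((l:ℝ)-1)/((m:ℝ)-1) := div_nonneg c1 hm1.le
    have q2 : ((l:ℝ)-1)/((m:ℝ)-1) ≤ 1 := (div_le_one hm1).mpr c2
    have e1 : 0 ≤ (((l:ℝ)-1)/((m:ℝ)-1)) * (α-1) := mul_nonneg q1 (by linarith)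
    have e2 : (((l:ℝ)-1)/((m:ℝ)-1)) * (α-1) ≤ 1 * (α-1) :=
      mul_le_mul_of_nonneg_right q2 (by linarith)
    constructor <;> linarith
  have hrange : ∀ l : ℕ, l ≤ m+1 → 0 ≤ a l ∧ a l ≤ α+1 := by
    intro l hl
    rcases Nat.eq_zero_or_pos l with rfl | hpos
    · rw [ha0]; constructor <;> linarith
    by_cases hlM : l = m+1
    · rw [hlM, ham1]; constructor <;> linarith
    · have h := hbnd l hpos (by omega)
      constructor <;> linarith [h.1, h.2]
  have hmono : ∀ k l : ℕ, k < l → l ≤ m+1 → a k < a l := by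
    intro k l hkl hlm
    by_cases hk0 : k = 0
    · subst hk0
      rw [ha0]
      by_cases hlM : l = m+1
      · rw [hlM, ham1]; linarith
      · have h := hbnd l (by omega) (by omega)
        linarith [h.1]
    · have hk1 : 1 ≤ k := by omega
      by_cases hlM : l = m+1
      · rw [hlM, ham1]
        have h := hbnd k hk1 (by omega)
        linarith [h.2]
      · have hlm' : l ≤ m := by omega
        rw [ha k hk1 (by omega), ha l (by omega) hlm']
        have hkl' : (k:ℝ) < (l:ℝ) := by exact_mod_cast hkl
        have hq : ((k:ℝ)-1)/((m:ℝ)-1) < ((l:ℝ)-1)/((m:ℝ)-1) := by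
          apply div_lt_div_of_pos_right ?_ hm1
          linarith
        have := mul_lt_mul_of_pos_right hq (show (0:ℝ) < α - 1 by linarith)
        linarith
  by_contra hcon
  have := baton_core α hα m hm2 a ha0 ha1 ham1 hmono hrange n B hB hcon
  omega
end

section
/- For every real α > 1 and every positive integer n, the chromatic number χ(R^n_∞; B(1,α)) is at least ((⌈α⌉+2)/(⌈α⌉+1))^n. In particular, B(1,α) is exponentially ℓ∞-Ramsey. -/
namespace Stmt6Aux

/-- Combinatorial edge (baton pattern) on the discrete chain `{0,…,m}` per coordinate. -/
def IsEdge (m : ℕ) {n : ℕ} (x y z : Fin n → ℕ) : Prop :=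
  (∀ i, x i ≤ y i + 1 ∧ y i ≤ x i + 1) ∧
  (∀ i, ¬(y i = 0 ∧ z i = m) ∧ ¬(y i = m ∧ z i = 0)) ∧
  (∃ i, (x i = 0 ∧ y i = 1 ∧ z i = m) ∨ (x i = m ∧ y i = m - 1 ∧ z i = 0))

def EdgeFree (m : ℕ) {n : ℕ} (W : Finset (Fin n → ℕ)) : Prop :=
  ∀ x ∈ W, ∀ y ∈ W, ∀ z ∈ W, ¬ IsEdge m x y z

def slice {n : ℕ} (W : Finset (Fin (n+1) → ℕ)) (t : ℕ) : Finset (Fin n → ℕ) :=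
  (W.filter (fun x => x (Fin.last n) = t)).image (fun x j => x (Fin.castSucc j))

lemma mem_slice {n : ℕ} {W : Finset (Fin (n+1) → ℕ)} {t : ℕ} {a : Fin n → ℕ} :
    a ∈ slice W t ↔ ∃ x ∈ W, x (Fin.last n) = t ∧ ∀ j, x (Fin.castSucc j) = a j := by
  simp only [slice, Finset.mem_image, Finset.mem_filter]
  constructor
  · rintro ⟨x, ⟨hxW, hxt⟩, rfl⟩
    exact ⟨x, hxW, hxt, fun j => rfl⟩
  · rintro ⟨x, hxW, hxt, hproj⟩
    exact ⟨x, ⟨hxW, hxt⟩, funext hproj⟩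

lemma lift {m n : ℕ} (hm : 3 ≤ m) {W : Finset (Fin (n+1) → ℕ)} (hEF : EdgeFree m W)
    {a b c' : Fin n → ℕ} {t₁ t₂ t₃ : ℕ}
    (ha : a ∈ slice W t₁) (hb : b ∈ slice W t₂) (hc : c' ∈ slice W t₃)
    (h12 : t₁ ≤ t₂ + 1) (h21 : t₂ ≤ t₁ + 1)
    (h2 : ¬(t₂ = 0 ∧ t₃ = m)) (h2' : ¬(t₂ = m ∧ t₃ = 0))
    (hE : IsEdge m a b c') : False := by
  obtain ⟨X, hXW, hXt, hXp⟩ := mem_slice.mp ha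
  obtain ⟨Y, hYW, hYt, hYp⟩ := mem_slice.mp hb
  obtain ⟨Z, hZW, hZt, hZp⟩ := mem_slice.mp hc
  refine (hEF X hXW Y hYW Z hZW) ⟨?_, ?_, ?_⟩
  · intro i
    induction i using Fin.lastCases with
    | last => rw [hXt, hYt]; exact ⟨h12, h21⟩
    | cast j => rw [hXp j, hYp j]; exact hE.1 j
  · intro i
    induction i using Fin.lastCases with
    | last => rw [hYt, hZt]; exact ⟨h2, h2'⟩
    | cast j => rw [hYp j, hZp j]; exact hE.2.1 j
  · obtain ⟨j, hj⟩ := hE.2.2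
    refine ⟨Fin.castSucc j, ?_⟩
    rw [hXp j, hYp j, hZp j]
    exact hj

lemma slice_bdd {m n : ℕ} {W : Finset (Fin (n+1) → ℕ)}
    (hbd : ∀ x ∈ W, ∀ i, x i ≤ m) :
    ∀ t, ∀ a ∈ slice W t, ∀ j, a j ≤ m := by
  intro t a ha j
  obtain ⟨X, hXW, _, hXp⟩ := mem_slice.mp ha
  rw [← hXp j]
  exact hbd X hXW _

/-- Main combinatorial lemma: an edge-free subset of `{0,…,m}^n` has at most `m^n` points. -/
lemma comb (m : ℕ) (hm : 3 ≤ m) :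
    ∀ (n : ℕ) (W : Finset (Fin n → ℕ)),
      (∀ x ∈ W, ∀ i, x i ≤ m) → EdgeFree m W → W.card ≤ m ^ n := by
  intro n
  induction n with
  | zero =>
    intro W _ _
    rw [pow_zero]
    refine Finset.card_le_one.mpr ?_
    intro a _ b _
    funext i
    exact i.elim0
  | succ n IH =>
    intro W hbd hEF
    have sliceBdd := slice_bdd (m := m) (W := W) hbd
    have sliceEF : ∀ t, EdgeFree m (slice W t) := by
      intro t x hx y hy z hz hE
      refine lift hm hEF hx hy hz ?_ ?_ ?_ ?_ hE <;> omega
    have sliceCard : ∀ t, (slice W t).card ≤ m ^ n := fun t =>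
      IH _ (sliceBdd t) (sliceEF t)
    have cardSlice : ∀ t, (W.filter (fun x => x (Fin.last n) = t)).card = (slice W t).card := by
      intro t
      rw [slice, Finset.card_image_of_injOn]
      intro x hx y hy hxy
      funext i
      induction i using Fin.lastCases with
      | last =>
        rw [(Finset.mem_filter.mp hx).2, (Finset.mem_filter.mp hy).2]
      | cast j =>
        exact congrFun hxy j
    -- the four extreme slices
    have hAB : ((slice W 0) ∪ (slice W 1)).card ≤ m ^ n := by
      refine IH _ ?_ ?_
      · intro a ha j
        rcases Finset.mem_union.mp ha with h | h
        · exact sliceBdd 0 a h j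
        · exact sliceBdd 1 a h j
      · intro x hx y hy z hz hE
        rcases Finset.mem_union.mp hx with hx' | hx' <;>
          rcases Finset.mem_union.mp hy with hy' | hy' <;>
            rcases Finset.mem_union.mp hz with hz' | hz' <;>
              (refine lift hm hEF hx' hy' hz' ?_ ?_ ?_ ?_ hE <;> omega)
    have hCD : ((slice W (m-1)) ∪ (slice W m)).card ≤ m ^ n := by
      refine IH _ ?_ ?_
      · intro a ha j
        rcases Finset.mem_union.mp ha with h | h
        · exact sliceBdd (m-1) a h j
        · exact sliceBdd m a h j
      · intro x hx y hy z hz hE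
        rcases Finset.mem_union.mp hx with hx' | hx' <;>
          rcases Finset.mem_union.mp hy with hy' | hy' <;>
            rcases Finset.mem_union.mp hz with hz' | hz' <;>
              (refine lift hm hEF hx' hy' hz' ?_ ?_ ?_ ?_ hE <;> omega)
    -- opposition: a point in slices 0 and 1 simultaneously is opposed to every point of slice m
    have hOpp : ∀ a, a ∈ slice W 0 → a ∈ slice W 1 → ∀ d ∈ slice W m,
        ∃ i, (a i = 0 ∧ d i = m) ∨ (a i = m ∧ d i = 0) := by
      intro a haA haB d hdD
      by_contra hcon
      obtain ⟨X, hXW, hXt, hXp⟩ := mem_slice.mp haA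
      obtain ⟨Y, hYW, hYt, hYp⟩ := mem_slice.mp haB
      obtain ⟨Z, hZW, hZt, hZp⟩ := mem_slice.mp hdD
      refine (hEF X hXW Y hYW Z hZW) ⟨?_, ?_, ?_⟩
      · intro i
        induction i using Fin.lastCases with
        | last => rw [hXt, hYt]; omega
        | cast j => rw [hXp j, hYp j]; omega
      · intro i
        induction i using Fin.lastCases with
        | last => rw [hYt, hZt]; omega
        | cast j =>
          rw [hYp j, hZp j]
          have hcj := not_or.mp (not_exists.mp hcon j)
          exact ⟨hcj.1, hcj.2⟩
      · exact ⟨Fin.last n, Or.inl ⟨hXt, hYt, hZt⟩⟩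
    have hdisj : Disjoint ((slice W 0) ∩ (slice W 1)) ((slice W (m-1)) ∩ (slice W m)) := by
      rw [Finset.disjoint_left]
      intro a haAB haCD
      obtain ⟨i, hi⟩ := hOpp a (Finset.mem_inter.mp haAB).1 (Finset.mem_inter.mp haAB).2
        a (Finset.mem_inter.mp haCD).2
      omega
    have hU : (((slice W 0) ∩ (slice W 1)) ∪ ((slice W (m-1)) ∩ (slice W m))).card ≤ m ^ n := by
      refine IH _ ?_ ?_
      · intro a ha j
        rcases Finset.mem_union.mp ha with h | h
        · exact sliceBdd 0 a (Finset.mem_inter.mp h).1 j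
        · exact sliceBdd m a (Finset.mem_inter.mp h).2 j
      · intro x hx y hy z hz hE
        rcases Finset.mem_union.mp hy with hy' | hy'
        · have hyA := (Finset.mem_inter.mp hy').1
          have hyB := (Finset.mem_inter.mp hy').2
          rcases Finset.mem_union.mp hx with hx' | hx'
          · have hxA := (Finset.mem_inter.mp hx').1
            rcases Finset.mem_union.mp hz with hz' | hz'
            · refine lift hm hEF hxA hyB (Finset.mem_inter.mp hz').2 ?_ ?_ ?_ ?_ hE <;> omega
            · refine lift hm hEF hxA hyB (Finset.mem_inter.mp hz').1 ?_ ?_ ?_ ?_ hE <;> omega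
          · have hxD := (Finset.mem_inter.mp hx').2
            obtain ⟨i, hi⟩ := hOpp y hyA hyB x hxD
            have hw := hE.1 i
            omega
        · have hyC := (Finset.mem_inter.mp hy').1
          rcases Finset.mem_union.mp hx with hx' | hx'
          · obtain ⟨i, hi⟩ := hOpp x (Finset.mem_inter.mp hx').1 (Finset.mem_inter.mp hx').2
              y (Finset.mem_inter.mp hy').2
            have hw := hE.1 i
            omega
          · have hxD := (Finset.mem_inter.mp hx').2
            rcases Finset.mem_union.mp hz with hz' | hz'
            · refine lift hm hEF hxD hyC (Finset.mem_inter.mp hz').2 ?_ ?_ ?_ ?_ hE <;> omega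
            · refine lift hm hEF hxD hyC (Finset.mem_inter.mp hz').1 ?_ ?_ ?_ ?_ hE <;> omega
    -- counting (keep all `Finset.sum`-containing hypotheses after the last `omega`)
    have e1 : ((slice W 0) ∪ (slice W 1)).card + ((slice W 0) ∩ (slice W 1)).card
        = (slice W 0).card + (slice W 1).card := Finset.card_union_add_card_inter _ _
    have e2 : ((slice W (m-1)) ∪ (slice W m)).card + ((slice W (m-1)) ∩ (slice W m)).card
        = (slice W (m-1)).card + (slice W m).card := Finset.card_union_add_card_inter _ _
    have e3 : (((slice W 0) ∩ (slice W 1)) ∪ ((slice W (m-1)) ∩ (slice W m))).card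
        = ((slice W 0) ∩ (slice W 1)).card + ((slice W (m-1)) ∩ (slice W m)).card :=
      Finset.card_union_of_disjoint hdisj
    have key4 : (slice W 0).card + (slice W 1).card
        + (slice W (m-1)).card + (slice W m).card ≤ 3 * m ^ n := by omega
    have hm4 : m + 1 - 4 = m - 3 := by omega
    have harith : (m - 3) * m ^ n + 3 * m ^ n = m * m ^ n := by
      have h3 : m - 3 + 3 = m := by omega
      rw [← Nat.add_mul, h3]
    have hs4 : ({0, 1, m-1, m} : Finset ℕ) ⊆ Finset.range (m+1) := by
      intro t ht
      simp only [Finset.mem_insert, Finset.mem_singleton] at ht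
      rw [Finset.mem_range]
      omega
    have hcard4 : ({0, 1, m-1, m} : Finset ℕ).card = 4 := by
      rw [show ({0, 1, m-1, m} : Finset ℕ) = insert 0 (insert 1 (insert (m-1) {m})) from rfl]
      rw [Finset.card_insert_of_notMem (by simp; omega),
        Finset.card_insert_of_notMem (by simp; omega),
        Finset.card_insert_of_notMem (by simp; omega), Finset.card_singleton]
    have hsum4 : ∑ t ∈ ({0, 1, m-1, m} : Finset ℕ), (slice W t).card
        = (slice W 0).card + (slice W 1).card + (slice W (m-1)).card + (slice W m).card := by
      rw [show ({0, 1, m-1, m} : Finset ℕ) = insert 0 (insert 1 (insert (m-1) {m})) from rfl]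
      rw [Finset.sum_insert (by simp; omega), Finset.sum_insert (by simp; omega),
        Finset.sum_insert (by simp; omega), Finset.sum_singleton]
      ring
    have hrest : ∑ t ∈ Finset.range (m+1) \ ({0, 1, m-1, m} : Finset ℕ), (slice W t).card
        ≤ (m - 3) * m ^ n := by
      have hb : ∀ t ∈ Finset.range (m+1) \ ({0, 1, m-1, m} : Finset ℕ),
          (slice W t).card ≤ m ^ n := fun t _ => sliceCard t
      calc ∑ t ∈ Finset.range (m+1) \ ({0, 1, m-1, m} : Finset ℕ), (slice W t).card
          ≤ (Finset.range (m+1) \ ({0, 1, m-1, m} : Finset ℕ)).card • m ^ n :=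
            Finset.sum_le_card_nsmul _ _ _ hb
        _ = (m - 3) * m ^ n := by
            rw [Finset.card_sdiff_of_subset hs4, Finset.card_range, hcard4, smul_eq_mul, hm4]
    have partition : W.card
        = ∑ t ∈ Finset.range (m+1), (W.filter (fun x => x (Fin.last n) = t)).card :=
      Finset.card_eq_sum_card_fiberwise
        (fun x hx => Finset.mem_range.mpr (Nat.lt_succ_of_le (hbd x hx _)))
    have hsum_eq : W.card = ∑ t ∈ Finset.range (m+1), (slice W t).card := by
      rw [partition]
      exact Finset.sum_congr rfl (fun t _ => cardSlice t)
    calc W.card = ∑ t ∈ Finset.range (m+1), (slice W t).card := hsum_eq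
      _ = ∑ t ∈ Finset.range (m+1) \ ({0, 1, m-1, m} : Finset ℕ), (slice W t).card
          + ∑ t ∈ ({0, 1, m-1, m} : Finset ℕ), (slice W t).card := (Finset.sum_sdiff hs4).symm
      _ ≤ (m - 3) * m ^ n + 3 * m ^ n := by
          rw [hsum4]
          exact Nat.add_le_add hrest key4
      _ = m * m ^ n := harith
      _ = m ^ (n+1) := by rw [pow_succ, Nat.mul_comm]

end Stmt6Aux

open Stmt6Aux in
/-- `χ(ℝ^n_∞; B(1,α)) ≥ ((⌈α⌉+2)/(⌈α⌉+1))^n`: any coloring of `ℝ^n` (max metric)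
with fewer than `((⌈α⌉+2)/(⌈α⌉+1))^n` colors contains a monochromatic isometric
copy of the baton `{0, 1, 1+α}`. -/
theorem stmt_6 (α : ℝ) (hα : 1 < α) (n : ℕ) (hn : 0 < n) (N : ℕ)
    (hN : (N : ℝ) < (((⌈α⌉₊ : ℝ) + 2) / ((⌈α⌉₊ : ℝ) + 1)) ^ n)
    (c : (Fin n → ℝ) → Fin N) :
    ∃ u v w : Fin n → ℝ,
      c u = c v ∧ c v = c w ∧
      dist u v = 1 ∧ dist v w = α ∧ dist u w = α + 1 := by
  classical
  set k : ℕ := ⌈α⌉₊ with hkdef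
  have hα0 : (0:ℝ) ≤ α := le_of_lt (lt_trans one_pos hα)
  have hk2 : 2 ≤ k := by
    have h1 : 1 < ⌈α⌉₊ := by
      rw [Nat.lt_ceil]
      exact_mod_cast hα
    omega
  set m : ℕ := k + 1 with hmdef
  have hm : 3 ≤ m := by omega
  have hαk : α ≤ (k:ℝ) := Nat.le_ceil α
  have hk1α : (k:ℝ) - 1 < α := by
    have := Nat.ceil_lt_add_one hα0
    rw [← hkdef] at this
    linarith
  have hkR : (2:ℝ) ≤ (k:ℝ) := by exact_mod_cast hk2
  -- the chain map
  set ymap : ℕ → ℝ := fun j => (j:ℝ) + (if k ≤ j then α - (k:ℝ) else 0) with hymap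
  have hval : ∀ j, j ≤ m → (j + 1 ≤ k ∧ ymap j = (j:ℝ))
      ∨ (j = k ∧ ymap j = α) ∨ (j = k + 1 ∧ ymap j = α + 1) := by
    intro j hj
    rcases (by omega : j + 1 ≤ k ∨ j = k ∨ j = k + 1) with h | h | h
    · left
      refine ⟨h, ?_⟩
      rw [hymap]
      simp only [if_neg (by omega : ¬ k ≤ j), add_zero]
    · right; left
      refine ⟨h, ?_⟩
      rw [hymap]
      simp only [h, if_pos (le_refl k)]
      ring
    · right; right
      refine ⟨h, ?_⟩
      rw [hymap]
      simp only [h, if_pos (by omega : k ≤ k + 1)]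
      push_cast
      ring
  -- value lemmas
  have ymap0 : ymap 0 = 0 := by
    rw [hymap]; simp only [if_neg (by omega : ¬ k ≤ 0)]; norm_num
  have ymap1 : ymap 1 = 1 := by
    rw [hymap]; simp only [if_neg (by omega : ¬ k ≤ 1)]; norm_num
  have ymapk : ymap k = α := by
    rw [hymap]; simp only [if_pos (le_refl k)]; push_cast; ring
  have ymapk1 : ymap (k+1) = α + 1 := by
    rw [hymap]; simp only [if_pos (by omega : k ≤ k + 1)]; push_cast; ring
  -- distance bounds
  have L1 : ∀ j j', j ≤ m → j' ≤ m → j ≤ j' + 1 → j' ≤ j + 1 →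
      |ymap j - ymap j'| ≤ 1 := by
    intro j j' hjm hj'm h1 h2
    have c1 : (j:ℝ) ≤ (j':ℝ) + 1 := by exact_mod_cast h1
    have c2 : (j':ℝ) ≤ (j:ℝ) + 1 := by exact_mod_cast h2
    rcases hval j hjm with ⟨hj, ej⟩ | ⟨hj, ej⟩ | ⟨hj, ej⟩ <;>
      rcases hval j' hj'm with ⟨hj', ej'⟩ | ⟨hj', ej'⟩ | ⟨hj', ej'⟩ <;>
        rw [ej, ej', abs_le]
    · exact ⟨by linarith, by linarith⟩
    · have : (j:ℝ) + 1 ≤ (k:ℝ) := by exact_mod_cast hj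
      have hc : (k:ℝ) ≤ (j:ℝ) + 1 := by
        have : k ≤ j + 1 := by omega
        exact_mod_cast this
      exact ⟨by linarith, by linarith⟩
    · -- j + 1 ≤ k and j' = k+1: impossible by adjacency
      exact absurd (by omega : False) (fun h => h)
    · have : (j':ℝ) + 1 ≤ (k:ℝ) := by exact_mod_cast hj'
      have hc : (k:ℝ) ≤ (j':ℝ) + 1 := by
        have : k ≤ j' + 1 := by omega
        exact_mod_cast this
      exact ⟨by linarith, by linarith⟩
    · exact ⟨by linarith, by linarith⟩
    · exact ⟨by linarith, by linarith⟩
    · exact absurd (by omega : False) (fun h => h)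
    · exact ⟨by linarith, by linarith⟩
    · exact ⟨by linarith, by linarith⟩
  have L2 : ∀ j j', j ≤ m → j' ≤ m → ¬(j = 0 ∧ j' = m) → ¬(j = m ∧ j' = 0) →
      |ymap j - ymap j'| ≤ α := by
    intro j j' hjm hj'm hx1 hx2
    rcases hval j hjm with ⟨hj, ej⟩ | ⟨hj, ej⟩ | ⟨hj, ej⟩ <;>
      rcases hval j' hj'm with ⟨hj', ej'⟩ | ⟨hj', ej'⟩ | ⟨hj', ej'⟩ <;>
        rw [ej, ej', abs_le]
    · have d1 : (j:ℝ) + 1 ≤ (k:ℝ) := by exact_mod_cast hj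
      have d2 : (j':ℝ) + 1 ≤ (k:ℝ) := by exact_mod_cast hj'
      have d3 : (0:ℝ) ≤ (j:ℝ) := by positivity
      have d4 : (0:ℝ) ≤ (j':ℝ) := by positivity
      exact ⟨by linarith, by linarith⟩
    · have d1 : (j:ℝ) + 1 ≤ (k:ℝ) := by exact_mod_cast hj
      have d3 : (0:ℝ) ≤ (j:ℝ) := by positivity
      exact ⟨by linarith, by linarith⟩
    · -- j < k, j' = m : then j ≥ 1
      have hj1 : 1 ≤ j := by omega
      have d1 : (1:ℝ) ≤ (j:ℝ) := by exact_mod_cast hj1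
      have d2 : (j:ℝ) + 1 ≤ (k:ℝ) := by exact_mod_cast hj
      exact ⟨by linarith, by linarith⟩
    · have d2 : (j':ℝ) + 1 ≤ (k:ℝ) := by exact_mod_cast hj'
      have d4 : (0:ℝ) ≤ (j':ℝ) := by positivity
      exact ⟨by linarith, by linarith⟩
    · exact ⟨by linarith, by linarith⟩
    · exact ⟨by linarith, by linarith⟩
    · -- j = m, j' < k : then j' ≥ 1
      have hj1 : 1 ≤ j' := by omega
      have d1 : (1:ℝ) ≤ (j':ℝ) := by exact_mod_cast hj1
      have d2 : (j':ℝ) + 1 ≤ (k:ℝ) := by exact_mod_cast hj'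
      exact ⟨by linarith, by linarith⟩
    · exact ⟨by linarith, by linarith⟩
    · exact ⟨by linarith, by linarith⟩
  have L3 : ∀ j j', j ≤ m → j' ≤ m → |ymap j - ymap j'| ≤ α + 1 := by
    have hb : ∀ j, j ≤ m → 0 ≤ ymap j ∧ ymap j ≤ α + 1 := by
      intro j hj
      rcases hval j hj with ⟨h, e⟩ | ⟨h, e⟩ | ⟨h, e⟩ <;> rw [e]
      · have d1 : (j:ℝ) + 1 ≤ (k:ℝ) := by exact_mod_cast h
        have d3 : (0:ℝ) ≤ (j:ℝ) := by positivity
        exact ⟨d3, by linarith⟩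
      · exact ⟨by linarith, by linarith⟩
      · exact ⟨by linarith, by linarith⟩
    intro j j' hjm hj'm
    have b1 := hb j hjm
    have b2 := hb j' hj'm
    rw [abs_le]
    exact ⟨by linarith [b1.1, b1.2, b2.1, b2.2], by linarith [b1.1, b1.2, b2.1, b2.2]⟩
  -- the probe grid and pigeonhole
  set P : (Fin n → ℕ) → (Fin n → ℝ) := fun a i => ymap (a i) with hP
  set grid : Finset (Fin n → ℕ) := Fintype.piFinset (fun _ : Fin n => Finset.range (m+1))
    with hgrid
  have hgcard : grid.card = (m+1)^n := by
    rw [hgrid, Fintype.card_piFinset]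
    simp [Finset.card_range]
  have hNmn : N * m^n < (m+1)^n := by
    have hmpos : (0:ℝ) < (m:ℝ)^n := by positivity
    have hN' : (N:ℝ) < (((m:ℝ)+1)/(m:ℝ))^n := by
      have hcast : ((k:ℝ) + 2) / ((k:ℝ) + 1) = ((m:ℝ)+1)/(m:ℝ) := by
        rw [hmdef]
        push_cast
        ring_nf
      rw [← hcast]
      exact hN
    have h2 : (N:ℝ) * (m:ℝ)^n < ((m:ℝ)+1)^n := by
      rw [div_pow] at hN'
      calc (N:ℝ) * (m:ℝ)^n < (((m:ℝ)+1)^n / (m:ℝ)^n) * (m:ℝ)^n := by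
            exact mul_lt_mul_of_pos_right hN' hmpos
        _ = ((m:ℝ)+1)^n := by field_simp
    exact_mod_cast h2
  obtain ⟨ν, _, hν⟩ := Finset.exists_lt_card_fiber_of_mul_lt_card_of_maps_to
    (s := grid) (t := (Finset.univ : Finset (Fin N))) (f := fun a => c (P a))
    (fun a _ => Finset.mem_univ _)
    (by rw [Finset.card_univ, Fintype.card_fin, hgcard]; exact hNmn)
  set W : Finset (Fin n → ℕ) := grid.filter (fun a => c (P a) = ν) with hWdef
  have hbdW : ∀ x ∈ W, ∀ i, x i ≤ m := by
    intro x hx i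
    have h1 := (Finset.mem_filter.mp hx).1
    rw [hgrid, Fintype.mem_piFinset] at h1
    have := Finset.mem_range.mp (h1 i)
    omega
  have hNotEF : ¬ EdgeFree m W := by
    intro hEF
    have := comb m hm n W hbdW hEF
    omega
  rw [EdgeFree] at hNotEF
  push_neg at hNotEF
  obtain ⟨x, hx, y, hy, z, hz, hE⟩ := hNotEF
  have hcx : c (P x) = ν := (Finset.mem_filter.mp hx).2
  have hcy : c (P y) = ν := (Finset.mem_filter.mp hy).2
  have hcz : c (P z) = ν := (Finset.mem_filter.mp hz).2
  have hbx := hbdW x hx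
  have hby := hbdW y hy
  have hbz := hbdW z hz
  refine ⟨P x, P y, P z, hcx.trans hcy.symm, hcy.trans hcz.symm, ?_, ?_, ?_⟩
  · -- dist (P x) (P y) = 1
    apply le_antisymm
    · rw [dist_pi_le_iff (by norm_num : (0:ℝ) ≤ 1)]
      intro i
      rw [Real.dist_eq]
      exact L1 (x i) (y i) (hbx i) (hby i) (hE.1 i).1 (hE.1 i).2
    · obtain ⟨i, hi⟩ := hE.2.2
      have hdi : dist (P x i) (P y i) = 1 := by
        rcases hi with ⟨h1, h2, _⟩ | ⟨h1, h2, _⟩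
        · rw [Real.dist_eq, hP]
          simp only [h1, h2, ymap0, ymap1]
          norm_num
        · rw [Real.dist_eq, hP]
          have hm1 : m - 1 = k := by omega
          simp only [h1, h2, hm1, hmdef, Nat.add_sub_cancel, ymapk, ymapk1]
          rw [abs_of_nonneg (by linarith)]
          ring
      calc (1:ℝ) = dist (P x i) (P y i) := hdi.symm
        _ ≤ dist (P x) (P y) := dist_le_pi_dist (P x) (P y) i
  · -- dist (P y) (P z) = α
    apply le_antisymm
    · rw [dist_pi_le_iff (by linarith : (0:ℝ) ≤ α)]
      intro i
      rw [Real.dist_eq]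
      exact L2 (y i) (z i) (hby i) (hbz i) (hE.2.1 i).1 (hE.2.1 i).2
    · obtain ⟨i, hi⟩ := hE.2.2
      have hdi : dist (P y i) (P z i) = α := by
        rcases hi with ⟨_, h2, h3⟩ | ⟨_, h2, h3⟩
        · rw [Real.dist_eq, hP]
          simp only [h2, h3, hmdef, ymap1, ymapk1]
          rw [abs_of_nonpos (by linarith)]
          ring
        · rw [Real.dist_eq, hP]
          have hm1 : m - 1 = k := by omega
          simp only [h2, h3, hm1, ymapk, ymap0]
          rw [abs_of_nonneg (by linarith)]
          ring
      calc α = dist (P y i) (P z i) := hdi.symm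
        _ ≤ dist (P y) (P z) := dist_le_pi_dist (P y) (P z) i
  · -- dist (P x) (P z) = α + 1
    apply le_antisymm
    · rw [dist_pi_le_iff (by linarith : (0:ℝ) ≤ α + 1)]
      intro i
      rw [Real.dist_eq]
      exact L3 (x i) (z i) (hbx i) (hbz i)
    · obtain ⟨i, hi⟩ := hE.2.2
      have hdi : dist (P x i) (P z i) = α + 1 := by
        rcases hi with ⟨h1, _, h3⟩ | ⟨h1, _, h3⟩
        · rw [Real.dist_eq, hP]
          simp only [h1, h3, hmdef, ymap0, ymapk1]
          rw [abs_of_nonpos (by linarith)]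
          ring
        · rw [Real.dist_eq, hP]
          simp only [h1, h3, hmdef, ymapk1, ymap0]
          rw [abs_of_nonneg (by linarith)]
          ring
      calc α + 1 = dist (P x i) (P z i) := hdi.symm
        _ ≤ dist (P x) (P z) := dist_le_pi_dist (P x) (P z) i
end

section
/- Let k be a positive integer and α_1,...,α_k positive reals, and let Γ = {γ ≤ α_1+...+α_k : γ = d_1α_1+...+d_kα_k for some nonnegative integers d_i}. Then there exist positive integers p_1,...,p_k and a strictly increasing sequence of reals a_0 < a_1 < ... < a_m with m = p_1+...+p_k such that (i) a_{l+r} ≤ a_l + a_r whenever l, r ≥ 1 and l + r ≤ m, and (ii) for every γ = d_1α_1+...+d_kα_k ∈ Γ one has d_1p_1+...+d_kp_k ≤ m and a_{d_1p_1+...+d_kp_k} = d_1α_1+...+d_kα_k. -/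
open Finset

lemma exists_good_p (k : ℕ) (hk : 0 < k) (α : Fin k → ℝ) (hα : ∀ i, 0 < α i)
    (B : ℕ) (hB : 1 ≤ B) :
    ∃ p : Fin k → ℕ, (∀ i, 0 < p i) ∧
      ∀ c : Fin k → ℤ, (∀ i, |c i| ≤ (B : ℤ)) →
        ((∑ i, (c i : ℝ) * α i = 0 → ∑ i, c i * (p i : ℤ) = 0) ∧
         (0 < ∑ i, (c i : ℝ) * α i → 0 < ∑ i, c i * (p i : ℤ))) := by
  let W : Submodule ℚ ℝ := Submodule.span ℚ (Set.range α)
  haveI : FiniteDimensional ℚ W := FiniteDimensional.span_of_finite ℚ (Set.finite_range α)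
  set s := Module.finrank ℚ W with hs
  let b : Module.Basis (Fin s) ℚ W := Module.finBasis ℚ W
  let αW : Fin k → W := fun i => ⟨α i, Submodule.subset_span ⟨i, rfl⟩⟩
  let r : Fin k → Fin s → ℚ := fun i => b.equivFun (αW i)
  let β : Fin s → ℝ := fun j => ((b j : W) : ℝ)
  have hrepr : ∀ i, α i = ∑ j, (r i j : ℝ) * β j := by
    intro i
    have h := b.sum_equivFun (αW i)
    have h2 := congrArg (Subtype.val) h
    have h3 : (αW i : ℝ) = α i := rfl
    rw [h3] at h2
    rw [← h2, Submodule.coe_sum]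
    refine Finset.sum_congr rfl (fun j _ => ?_)
    rw [Submodule.coe_smul, Rat.smul_def]
  have hzero : ∀ c : Fin k → ℤ, (∑ i, (c i : ℝ) * α i) = 0 →
      ∀ j, (∑ i, (c i : ℚ) * r i j) = 0 := by
    intro c hc j
    have hx : ((∑ i, (c i : ℚ) • αW i : W) : ℝ) = ∑ i, (c i : ℝ) * α i := by
      rw [Submodule.coe_sum]
      refine Finset.sum_congr rfl (fun i _ => ?_)
      rw [Submodule.coe_smul, Rat.smul_def]; push_cast; rfl
    have hx0 : (∑ i, (c i : ℚ) • αW i : W) = 0 := by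
      apply Subtype.ext; rw [hx, hc]; rfl
    have := congrArg (fun x => b.equivFun x j) hx0
    simpa [map_sum, map_smul, Finset.sum_apply, r, smul_eq_mul] using this
  -- weight vectors and the two sum identities
  let w : (Fin k → ℤ) → Fin s → ℚ := fun c j => ∑ i, (c i : ℚ) * r i j
  have hsumα : ∀ c : Fin k → ℤ, (∑ i, (c i : ℝ) * α i) = ∑ j, (w c j : ℝ) * β j := by
    intro c
    have : ∀ i, (c i : ℝ) * α i = ∑ j, (c i : ℚ) * (r i j : ℝ) * β j := by
      intro i; rw [hrepr i, Finset.mul_sum]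
      refine Finset.sum_congr rfl (fun j _ => ?_); push_cast; ring
    rw [Finset.sum_congr rfl (fun i _ => this i), Finset.sum_comm]
    refine Finset.sum_congr rfl (fun j _ => ?_)
    rw [← Finset.sum_mul]
    congr 1
    push_cast [w]
    rfl
  -- the candidate rational combination given u
  let q : (Fin s → ℚ) → Fin k → ℚ := fun u i => ∑ j, r i j * u j
  have hsumq : ∀ (u : Fin s → ℚ) (c : Fin k → ℤ),
      (∑ i, (c i : ℚ) * q u i) = ∑ j, w c j * u j := by
    intro u c
    simp only [q, Finset.mul_sum, w]
    rw [Finset.sum_comm]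
    refine Finset.sum_congr rfl (fun j _ => ?_)
    rw [Finset.sum_mul]
    refine Finset.sum_congr rfl (fun i _ => by ring)
  -- the finite set of relevant strictly-positive integer vectors
  let C : Finset (Fin k → ℤ) :=
    (Fintype.piFinset fun _ : Fin k => Finset.Icc (-(B:ℤ)) (B:ℤ)).filter
      (fun c => 0 < ∑ i, (c i : ℝ) * α i)
  have i0 : Fin k := ⟨0, hk⟩
  have hmemC : ∀ c : Fin k → ℤ, (∀ i, |c i| ≤ (B:ℤ)) → (0 < ∑ i, (c i : ℝ) * α i) → c ∈ C := by
    intro c hb hpos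
    refine Finset.mem_filter.2 ⟨Fintype.mem_piFinset.2 (fun i => ?_), hpos⟩
    rw [Finset.mem_Icc]; exact abs_le.1 (hb i)
  have hCne : C.Nonempty := by
    refine ⟨Pi.single i0 1, hmemC _ (fun i => ?_) ?_⟩
    · rcases eq_or_ne i i0 with h | h
      · subst h; rw [Pi.single_eq_same, abs_one]; exact_mod_cast hB
      · simp [Pi.single_apply, h]
    · rw [Finset.sum_eq_single i0]
      · simp [hα i0]
      · intro b _ hb; simp [Pi.single_apply, hb]
      · intro h; exact absurd (Finset.mem_univ i0) h
  -- choose δ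
  let g : (Fin k → ℤ) → ℝ := fun c =>
    (∑ i, (c i : ℝ) * α i) / ((∑ j, |(w c j : ℝ)|) + 1)
  have hgpos : ∀ c ∈ C, 0 < g c := by
    intro c hc
    have h1 := (Finset.mem_filter.1 hc).2
    have h2 : 0 < (∑ j, |(w c j : ℝ)|) + 1 := by positivity
    exact div_pos h1 h2
  let δ : ℝ := C.inf' hCne g
  have hδ : 0 < δ := by
    rw [Finset.lt_inf'_iff]; exact hgpos
  -- choose rational u close to β
  have hex : ∀ j, ∃ u : ℚ, β j < (u:ℝ) ∧ (u:ℝ) < β j + δ :=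
    fun j => exists_rat_btwn (lt_add_of_pos_right _ hδ)
  choose u hu1 hu2 using hex
  -- positivity of the rational sums for c ∈ C
  have hqpos : ∀ c ∈ C, 0 < ∑ i, (c i : ℚ) * q u i := by
    intro c hc
    rw [← Rat.cast_pos (K := ℝ)]
    push_cast [hsumq u c]
    have hδle : δ ≤ g c := Finset.inf'_le _ hc
    have key : ∀ j, (w c j : ℝ) * β j - |(w c j : ℝ)| * δ ≤ (w c j : ℝ) * (u j : ℝ) := by
      intro j
      have h1 : |(w c j : ℝ) * ((u j : ℝ) - β j)| ≤ |(w c j : ℝ)| * δ := by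
        rw [abs_mul]
        refine mul_le_mul_of_nonneg_left ?_ (abs_nonneg _)
        rw [abs_le]
        constructor
        · nlinarith [hu1 j, hu2 j]
        · nlinarith [hu1 j, hu2 j]
      nlinarith [neg_abs_le ((w c j : ℝ) * ((u j : ℝ) - β j)), h1]
    have hsum : (∑ j, (w c j : ℝ) * β j) - (∑ j, |(w c j : ℝ)|) * δ ≤ ∑ j, (w c j : ℝ) * (u j : ℝ) := by
      rw [Finset.sum_mul]
      rw [← Finset.sum_sub_distrib]
      exact Finset.sum_le_sum (fun j _ => key j)
    have h1 := (Finset.mem_filter.1 hc).2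
    have hv : (∑ j, (w c j : ℝ) * β j) = ∑ i, (c i : ℝ) * α i := (hsumα c).symm
    have hM : 0 < (∑ j, |(w c j : ℝ)|) + 1 := by positivity
    have : (∑ j, |(w c j : ℝ)|) * δ < ∑ i, (c i : ℝ) * α i := by
      calc (∑ j, |(w c j : ℝ)|) * δ ≤ (∑ j, |(w c j : ℝ)|) * g c := by
            refine mul_le_mul_of_nonneg_left hδle ?_
            positivity
        _ < ((∑ j, |(w c j : ℝ)|) + 1) * g c := by
            refine mul_lt_mul_of_pos_right ?_ (hgpos c hc); linarith
        _ = ∑ i, (c i : ℝ) * α i := by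
            simp only [g]
            rw [mul_div_assoc']
            exact mul_div_cancel_left₀ _ hM.ne'
    linarith [hsum, hv ▸ this]
  -- positivity of each q u i
  have hq0 : ∀ i, 0 < q u i := by
    intro i
    have hC : Pi.single i 1 ∈ C := by
      refine hmemC _ (fun i' => ?_) ?_
      · rcases eq_or_ne i' i with h | h
        · subst h; rw [Pi.single_eq_same, abs_one]; exact_mod_cast hB
        · simp [Pi.single_apply, h]
      · rw [Finset.sum_eq_single i]
        · simp [hα i]
        · intro b _ hb; simp [Pi.single_apply, hb]
        · intro h; exact absurd (Finset.mem_univ i) h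
    have := hqpos _ hC
    rw [Finset.sum_eq_single i] at this
    · simpa using this
    · intro b _ hb; simp [Pi.single_apply, hb]
    · intro h; exact absurd (Finset.mem_univ i) h
  -- clear denominators
  let N : ℕ := ∏ i, (q u i).den
  have hN : 0 < N := Finset.prod_pos (fun i _ => (q u i).pos)
  have hint : ∀ i, ∃ z : ℤ, ((N : ℚ) * q u i) = (z : ℚ) := by
    intro i
    obtain ⟨t, ht⟩ : ((q u i).den : ℕ) ∣ N := Finset.dvd_prod_of_mem _ (Finset.mem_univ i)
    refine ⟨(t : ℤ) * (q u i).num, ?_⟩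
    have hden : ((q u i).den : ℚ) ≠ 0 := by
      exact_mod_cast (q u i).den_nz
    rw [ht]
    push_cast
    rw [mul_comm ((q u i).den : ℚ) (t:ℚ), mul_assoc]
    congr 1
    have h5 := Rat.num_div_den (q u i)
    rw [div_eq_iff hden] at h5
    rw [mul_comm]
    exact h5.symm
  choose z hz using hint
  have hzpos : ∀ i, 0 < z i := by
    intro i
    have : (0:ℚ) < (z i : ℚ) := by
      rw [← hz i]
      have : (0:ℚ) < (N:ℚ) := by exact_mod_cast hN
      exact mul_pos this (hq0 i)
    exact_mod_cast this
  refine ⟨fun i => (z i).toNat, fun i => ?_, ?_⟩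
  · show 0 < (z i).toNat
    have := hzpos i; omega
  intro c hc
  have hcast : ∀ i, ((z i).toNat : ℤ) = z i := fun i => Int.toNat_of_nonneg (hzpos i).le
  have hsump : ((∑ i, c i * ((z i).toNat : ℤ) : ℤ) : ℚ) = (N : ℚ) * ∑ i, (c i : ℚ) * q u i := by
    push_cast
    rw [Finset.mul_sum]
    refine Finset.sum_congr rfl (fun i _ => ?_)
    have h4 : ((z i).toNat : ℚ) = ((z i : ℤ) : ℚ) := by exact_mod_cast congrArg (fun t : ℤ => (t : ℚ)) (hcast i)
    rw [h4, ← hz i]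
    ring
  constructor
  · intro h0
    have hq : (∑ i, (c i : ℚ) * q u i) = 0 := by
      rw [hsumq u c]
      refine Finset.sum_eq_zero (fun j _ => ?_)
      have hw : w c j = 0 := hzero c h0 j
      rw [hw, zero_mul]
    have : ((∑ i, c i * ((z i).toNat : ℤ) : ℤ) : ℚ) = 0 := by rw [hsump, hq, mul_zero]
    exact_mod_cast this
  · intro hpos
    have hq : 0 < ∑ i, (c i : ℚ) * q u i := hqpos c (hmemC c hc hpos)
    have : (0:ℚ) < ((∑ i, c i * ((z i).toNat : ℤ) : ℤ) : ℚ) := by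
      rw [hsump]
      have : (0:ℚ) < (N:ℚ) := by exact_mod_cast hN
      exact mul_pos this hq
    exact_mod_cast this

set_option maxHeartbeats 2000000 in
/-- Lemma on the approximating sequence: there are positive integers `p_1, …, p_k`
and reals `a_0 < ⋯ < a_m` with `m = p_1 + ⋯ + p_k` that are subadditive and
interpolate the nonnegative integer combinations `γ = d_1α_1 + ⋯ + d_kα_k ≤ α_1 + ⋯ + α_k`
at the indices `d_1p_1 + ⋯ + d_kp_k`. -/
theorem stmt_9 (k : ℕ) (hk : 0 < k) (α : ℕ → ℝ) (hα : ∀ i < k, 0 < α i) :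
    ∃ (p : ℕ → ℕ) (a : ℕ → ℝ), (∀ i < k, 0 < p i) ∧
      (∀ l < ∑ i ∈ Finset.range k, p i, a l < a (l + 1)) ∧
      (∀ l r : ℕ, 1 ≤ l → 1 ≤ r → l + r ≤ ∑ i ∈ Finset.range k, p i →
        a (l + r) ≤ a l + a r) ∧
      (∀ d : ℕ → ℕ,
        (∑ i ∈ Finset.range k, (d i : ℝ) * α i ≤ ∑ i ∈ Finset.range k, α i) →
        (∑ i ∈ Finset.range k, d i * p i ≤ ∑ i ∈ Finset.range k, p i ∧
          a (∑ i ∈ Finset.range k, d i * p i) =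
            ∑ i ∈ Finset.range k, (d i : ℝ) * α i)) := by
  classical
  set α' : Fin k → ℝ := fun i => α i.val with hα'def
  have hα' : ∀ i, 0 < α' i := fun i => hα i.val i.isLt
  set S : ℝ := ∑ i, α' i with hSdef
  have hS : 0 < S := Finset.sum_pos (fun i _ => hα' i) ⟨⟨0, hk⟩, Finset.mem_univ _⟩
  set A : ℕ := ⌈S + ∑ i, S / α' i⌉₊ + 1 with hAdef
  have hA1 : 1 ≤ A := Nat.le_add_left 1 _
  have hsum_nonneg : (0:ℝ) ≤ ∑ i, S / α' i :=
    Finset.sum_nonneg (fun i _ => le_of_lt (div_pos hS (hα' i)))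
  have hceil : S + ∑ i, S / α' i ≤ ((⌈S + ∑ i, S / α' i⌉₊ : ℕ) : ℝ) := Nat.le_ceil _
  have hAcast : ((⌈S + ∑ i, S / α' i⌉₊ : ℕ) : ℝ) ≤ (A : ℝ) := by
    rw [hAdef]; push_cast; linarith
  have hAS : S ≤ (A : ℝ) := by linarith
  have hAi : ∀ i, S / α' i ≤ (A : ℝ) := by
    intro i
    have h1 : S / α' i ≤ ∑ j, S / α' j :=
      Finset.single_le_sum (f := fun j => S / α' j)
        (fun j _ => le_of_lt (div_pos hS (hα' j))) (Finset.mem_univ i)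
    linarith
  obtain ⟨p, hp, hkey⟩ := exists_good_p k hk α' hα' (3*A) (by omega)
  set idx : (Fin k → ℕ) → ℕ := fun d => ∑ i, d i * p i with hidxdef
  set val : (Fin k → ℕ) → ℝ := fun d => ∑ i, (d i : ℝ) * α' i with hvaldef
  -- the difference identities
  have hidα : ∀ d e : Fin k → ℕ, ∑ i, (((e i : ℤ) - d i : ℤ) : ℝ) * α' i = val e - val d := by
    intro d e
    rw [hvaldef]
    simp only
    rw [← Finset.sum_sub_distrib]
    refine Finset.sum_congr rfl (fun i _ => ?_)
    push_cast
    ring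
  have hidp : ∀ d e : Fin k → ℕ, ∑ i, ((e i : ℤ) - d i) * (p i : ℤ) = (idx e : ℤ) - idx d := by
    intro d e
    rw [hidxdef]
    simp only
    push_cast
    rw [← Finset.sum_sub_distrib]
    refine Finset.sum_congr rfl (fun i _ => ?_)
    ring
  -- comparison lemmas
  have hcmp : ∀ d e : Fin k → ℕ, (∀ i, d i ≤ 2*A) → (∀ i, e i ≤ 2*A) →
      (val d = val e → idx d = idx e) ∧ (val d < val e → idx d < idx e) := by
    intro d e hd he
    have hb : ∀ i, |(e i : ℤ) - (d i : ℤ)| ≤ ((3*A : ℕ) : ℤ) := by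
      intro i
      have h1 := hd i; have h2 := he i
      rw [abs_le]
      constructor <;> [push_cast; push_cast] <;> omega
    obtain ⟨hz, hpos⟩ := hkey (fun i => (e i : ℤ) - d i) hb
    constructor
    · intro hve
      have h0 : ∑ i, (((e i : ℤ) - d i : ℤ) : ℝ) * α' i = 0 := by
        rw [hidα d e, hve]; ring
      have := hz h0
      rw [hidp d e] at this
      omega
    · intro hvl
      have h0 : 0 < ∑ i, (((e i : ℤ) - d i : ℤ) : ℝ) * α' i := by
        rw [hidα d e]; linarith
      have := hpos h0
      rw [hidp d e] at this
      omega
  have hlt : ∀ d e : Fin k → ℕ, (∀ i, d i ≤ 2*A) → (∀ i, e i ≤ 2*A) →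
      idx d < idx e → val d < val e := by
    intro d e hd he h
    by_contra hcon
    push_neg at hcon
    rcases eq_or_lt_of_le hcon with heq | hl2
    · have := (hcmp d e hd he).1 heq.symm; omega
    · have := (hcmp e d he hd).2 hl2; omega
  have hle : ∀ d e : Fin k → ℕ, (∀ i, d i ≤ 2*A) → (∀ i, e i ≤ 2*A) →
      idx d ≤ idx e → val d ≤ val e := by
    intro d e hd he h
    by_contra hcon
    push_neg at hcon
    have := (hcmp e d he hd).2 hcon
    omega
  -- the gap
  set T : Finset (Fin k → ℤ) :=
    (Fintype.piFinset fun _ : Fin k => Finset.Icc (-((3*A : ℕ) : ℤ)) ((3*A : ℕ) : ℤ)).filter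
      (fun c => 0 < ∑ i, (c i : ℝ) * α' i) with hTdef
  have hTmem : ∀ c : Fin k → ℤ, (∀ i, |c i| ≤ ((3*A:ℕ):ℤ)) → (0 < ∑ i, (c i : ℝ) * α' i) → c ∈ T := by
    intro c hb hpos
    refine Finset.mem_filter.2 ⟨Fintype.mem_piFinset.2 (fun i => ?_), hpos⟩
    rw [Finset.mem_Icc]; exact abs_le.1 (hb i)
  have hTne : T.Nonempty := by
    refine ⟨Pi.single ⟨0, hk⟩ 1, hTmem _ (fun i => ?_) ?_⟩
    · rcases eq_or_ne i ⟨0, hk⟩ with h | h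
      · subst h; rw [Pi.single_eq_same, abs_one]; push_cast; omega
      · simp [Pi.single_apply, h]
    · rw [Finset.sum_eq_single (⟨0, hk⟩ : Fin k)]
      · simp [hα' ⟨0, hk⟩]
      · intro b _ hb; simp [Pi.single_apply, hb]
      · intro h; exact absurd (Finset.mem_univ _) h
  set γ : ℝ := T.inf' hTne (fun c => ∑ i, (c i : ℝ) * α' i) with hγdef
  have hγ : 0 < γ := by
    rw [hγdef, Finset.lt_inf'_iff]
    intro c hc
    exact (Finset.mem_filter.1 hc).2
  have hgap : ∀ d e : Fin k → ℕ, (∀ i, d i ≤ 2*A) → (∀ i, e i ≤ 2*A) →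
      val d < val e → val d + γ ≤ val e := by
    intro d e hd he hv
    have hb : ∀ i, |(e i : ℤ) - (d i : ℤ)| ≤ ((3*A : ℕ) : ℤ) := by
      intro i
      have h1 := hd i; have h2 := he i
      rw [abs_le]
      constructor <;> [push_cast; push_cast] <;> omega
    have hposc : 0 < ∑ i, (((e i : ℤ) - d i : ℤ) : ℝ) * α' i := by
      rw [hidα d e]; linarith
    have hmem : (fun i => (e i : ℤ) - d i) ∈ T := hTmem _ hb hposc
    have h2 : γ ≤ val e - val d := by
      rw [hγdef]
      exact (hidα d e) ▸ Finset.inf'_le (fun c : Fin k → ℤ => ∑ i, (c i : ℝ) * α' i) hmem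
    linarith
  -- Dfin and m
  set one : Fin k → ℕ := fun _ => 1 with honedef
  have hone2A : ∀ i, one i ≤ 2*A := fun i => by simp [honedef]; omega
  set m : ℕ := ∑ i, p i with hmdef
  have hmidx : idx one = m := by simp [hidxdef, honedef, hmdef]
  have hm1 : 1 ≤ m := by
    have h1 : p ⟨0, hk⟩ ≤ m := by
      rw [hmdef]
      exact Finset.single_le_sum (f := fun i => p i) (fun i _ => Nat.zero_le _) (Finset.mem_univ _)
    have := hp ⟨0, hk⟩
    omega
  have hvone : val one = S := by
    rw [hvaldef, hSdef]
    simp [honedef]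
  have hentry : ∀ d : Fin k → ℕ, val d ≤ S → ∀ i, d i ≤ A := by
    intro d hd i
    have h1 : (d i : ℝ) * α' i ≤ val d := by
      rw [hvaldef]
      exact Finset.single_le_sum (f := fun j => (d j : ℝ) * α' j)
        (fun j _ => mul_nonneg (Nat.cast_nonneg _) (hα' j).le) (Finset.mem_univ i)
    have h2 : (d i : ℝ) ≤ S / α' i := by
      rw [le_div_iff₀ (hα' i)]; linarith
    have h3 : (d i : ℝ) ≤ (A : ℝ) := h2.trans (hAi i)
    exact_mod_cast h3
  set Dfin : Finset (Fin k → ℕ) :=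
    (Fintype.piFinset fun _ : Fin k => Finset.range (A+1)).filter (fun d => val d ≤ S) with hDdef
  have hmemD : ∀ d : Fin k → ℕ, val d ≤ S → d ∈ Dfin := by
    intro d hd
    refine Finset.mem_filter.2 ⟨Fintype.mem_piFinset.2 (fun i => ?_), hd⟩
    rw [Finset.mem_range]
    have := hentry d hd i
    omega
  have hDval : ∀ d ∈ Dfin, val d ≤ S := fun d hd => (Finset.mem_filter.1 hd).2
  have honeD : one ∈ Dfin := hmemD one (le_of_eq hvone)
  have hDbound : ∀ d ∈ Dfin, ∀ i, d i ≤ 2*A := by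
    intro d hd i
    have := hentry d (hDval d hd) i
    omega
  have hidxm : ∀ d ∈ Dfin, idx d ≤ m := by
    intro d hd
    rw [← hmidx]
    by_contra h
    push_neg at h
    have h2 := hlt one d hone2A (hDbound d hd) h
    have h3 := hDval d hd
    rw [hvone] at h2
    linarith
  -- epsilon
  set ε : ℝ := γ / (m+1) with hεdef
  have hε : 0 < ε := div_pos hγ (by positivity)
  have hεm : ∀ t : ℕ, t ≤ m → ε * (t : ℝ) < γ := by
    intro t ht
    have h1 : ε * (t : ℝ) ≤ ε * (m : ℝ) := by
      refine mul_le_mul_of_nonneg_left ?_ hε.le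
      exact_mod_cast ht
    have h2 : ε * ((m : ℝ) + 1) = γ := by
      rw [hεdef]
      field_simp
    nlinarith [hε]
  -- the sequence
  set obj : ℕ → (Fin k → ℕ) → ℝ := fun n d => val d - ε * ((idx d : ℝ) - (n : ℝ)) with hobjdef
  have hfeas : ∀ n, n ≤ m → one ∈ Dfin.filter (fun d => n ≤ idx d) := by
    intro n hn
    refine Finset.mem_filter.2 ⟨honeD, ?_⟩
    rw [hmidx]; exact hn
  set a : ℕ → ℝ := fun n =>
    if h : n ≤ m then (Dfin.filter (fun d => n ≤ idx d)).inf' ⟨one, hfeas n h⟩ (obj n) else 0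
    with hadef
  have ha_eq : ∀ n (h : n ≤ m),
      a n = (Dfin.filter (fun d => n ≤ idx d)).inf' ⟨one, hfeas n h⟩ (obj n) := by
    intro n h
    rw [hadef]
    exact dif_pos h
  -- special values
  have hspecial : ∀ d : Fin k → ℕ, val d ≤ S → idx d ≤ m ∧ a (idx d) = val d := by
    intro d hd
    have hdD : d ∈ Dfin := hmemD d hd
    have hidx : idx d ≤ m := hidxm d hdD
    refine ⟨hidx, ?_⟩
    rw [ha_eq _ hidx]
    apply le_antisymm
    · have h1 : (Dfin.filter (fun e => idx d ≤ idx e)).inf' ⟨one, hfeas _ hidx⟩ (obj (idx d)) ≤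
          obj (idx d) d :=
        Finset.inf'_le _ (Finset.mem_filter.2 ⟨hdD, le_refl (idx d)⟩)
      have h2 : obj (idx d) d = val d := by rw [hobjdef]; simp
      linarith
    · apply Finset.le_inf'
      intro e he
      obtain ⟨heD, hei⟩ := Finset.mem_filter.1 he
      rcases eq_or_lt_of_le hei with heq | hlt'
      · have hv1 : val d ≤ val e := hle d e (hDbound d hdD) (hDbound e heD) heq.le
        have hv2 : val e ≤ val d := hle e d (hDbound e heD) (hDbound d hdD) heq.ge
        have h2 : obj (idx d) e = val e - ε * ((idx e : ℝ) - (idx d : ℝ)) := by rw [hobjdef]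
        rw [← heq] at h2
        simp at h2
        linarith
      · have hv : val d < val e := hlt d e (hDbound d hdD) (hDbound e heD) hlt'
        have hg : val d + γ ≤ val e := hgap d e (hDbound d hdD) (hDbound e heD) hv
        have hb1 : ε * ((idx e : ℝ) - (idx d : ℝ)) ≤ ε * (idx e : ℝ) := by
          refine mul_le_mul_of_nonneg_left ?_ hε.le
          have : (0:ℝ) ≤ (idx d : ℝ) := Nat.cast_nonneg _
          linarith
        have hb2 : ε * ((idx e : ℝ)) < γ := hεm (idx e) (hidxm e heD)
        have h2 : obj (idx d) e = val e - ε * ((idx e : ℝ) - (idx d : ℝ)) := by rw [hobjdef]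
        linarith
  -- strict monotonicity
  have hmono : ∀ l, l < m → a l < a (l + 1) := by
    intro l hl
    have h1 : l + 1 ≤ m := hl
    have h0 : l ≤ m := le_of_lt hl
    obtain ⟨e, he, heq⟩ := Finset.exists_mem_eq_inf'
      (⟨one, hfeas _ h1⟩ : (Dfin.filter (fun d => l + 1 ≤ idx d)).Nonempty) (obj (l+1))
    obtain ⟨heD, hei⟩ := Finset.mem_filter.1 he
    have heF : e ∈ Dfin.filter (fun d => l ≤ idx d) :=
      Finset.mem_filter.2 ⟨heD, by omega⟩
    have h2 : a l ≤ obj l e := by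
      rw [ha_eq _ h0]
      exact Finset.inf'_le _ heF
    have h3 : a (l+1) = obj (l+1) e := by rw [ha_eq _ h1]; exact heq
    have h4 : obj l e = obj (l+1) e - ε := by
      rw [hobjdef]
      simp only
      push_cast
      ring
    linarith
  -- subadditivity
  have hsub : ∀ l r : ℕ, 1 ≤ l → 1 ≤ r → l + r ≤ m → a (l + r) ≤ a l + a r := by
    intro l r hl hr hlr
    have hlm : l ≤ m := by omega
    have hrm : r ≤ m := by omega
    obtain ⟨d, hd, hdq⟩ := Finset.exists_mem_eq_inf'
      (⟨one, hfeas _ hlm⟩ : (Dfin.filter (fun d => l ≤ idx d)).Nonempty) (obj l)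
    obtain ⟨e, he, heq⟩ := Finset.exists_mem_eq_inf'
      (⟨one, hfeas _ hrm⟩ : (Dfin.filter (fun d => r ≤ idx d)).Nonempty) (obj r)
    obtain ⟨hdD, hdi⟩ := Finset.mem_filter.1 hd
    obtain ⟨heD, hei⟩ := Finset.mem_filter.1 he
    have hal : a l = obj l d := by rw [ha_eq _ hlm]; exact hdq
    have har : a r = obj r e := by rw [ha_eq _ hrm]; exact heq
    set g : Fin k → ℕ := fun i => d i + e i with hgdef
    have hval_add : val g = val d + val e := by
      rw [hvaldef]
      simp only [hgdef]
      rw [← Finset.sum_add_distrib]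
      refine Finset.sum_congr rfl (fun i _ => ?_)
      push_cast
      ring
    have hidx_add : idx g = idx d + idx e := by
      rw [hidxdef]
      simp only [hgdef]
      rw [← Finset.sum_add_distrib]
      refine Finset.sum_congr rfl (fun i _ => ?_)
      ring
    have hbound_g : ∀ i, g i ≤ 2*A := by
      intro i
      have h1 := hentry d (hDval d hdD) i
      have h2 := hentry e (hDval e heD) i
      simp only [hgdef]
      omega
    by_cases hcase : idx g ≤ m
    · have hvg : val g ≤ S := by
        have h1 : idx g ≤ idx one := by rw [hmidx]; exact hcase
        have h2 := hle g one hbound_g hone2A h1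
        rw [hvone] at h2
        exact h2
      have hgD : g ∈ Dfin := hmemD g hvg
      have hgF : g ∈ Dfin.filter (fun x => l + r ≤ idx x) := by
        refine Finset.mem_filter.2 ⟨hgD, ?_⟩
        rw [hidx_add]
        omega
      have h3 : a (l+r) ≤ obj (l+r) g := by
        rw [ha_eq _ hlr]
        exact Finset.inf'_le _ hgF
      have h4 : obj (l+r) g = obj l d + obj r e := by
        rw [hobjdef]
        simp only
        rw [hval_add, hidx_add]
        push_cast
        ring
      linarith
    · push_neg at hcase
      have h3 : a (l+r) ≤ obj (l+r) one := by
        rw [ha_eq _ hlr]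
        exact Finset.inf'_le _ (hfeas _ hlr)
      have hvgt : val one < val g := by
        refine hlt one g hone2A hbound_g ?_
        rw [hmidx]; exact hcase
      have hg2 : val one + γ ≤ val g :=
        hgap one g hone2A hbound_g hvgt
      have hid2 : (idx g : ℝ) - (m : ℝ) ≤ (m : ℝ) := by
        have h5 := hidxm d hdD
        have h6 := hidxm e heD
        have : idx g ≤ 2 * m := by rw [hidx_add]; omega
        push_cast
        have : (idx g : ℝ) ≤ 2 * (m : ℝ) := by exact_mod_cast this
        linarith
      have hb1 : ε * ((idx g : ℝ) - (m:ℝ)) ≤ ε * (m : ℝ) :=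
        mul_le_mul_of_nonneg_left hid2 hε.le
      have hb2 : ε * (m : ℝ) < γ := hεm m le_rfl
      have h4 : obj (l+r) one = S - ε * ((m:ℝ) - ((l:ℝ) + r)) := by
        rw [hobjdef]
        simp only
        rw [hvone, hmidx]
        push_cast
        ring
      have h5 : obj l d + obj r e = val g - ε * ((idx g : ℝ) - ((l:ℝ) + r)) := by
        rw [hobjdef]
        simp only
        rw [hval_add, hidx_add]
        push_cast
        ring
      rw [hvone] at hg2
      rw [h4] at h3
      rw [hal, har, h5]
      nlinarith [hε]
  -- packaging
  set p' : ℕ → ℕ := fun n => if h : n < k then p ⟨n, h⟩ else 1 with hp'def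
  have hsum_p' : ∑ i ∈ Finset.range k, p' i = m := by
    rw [← Fin.sum_univ_eq_sum_range, hmdef]
    refine Finset.sum_congr rfl (fun i _ => ?_)
    simp [hp'def, i.isLt]
  refine ⟨p', a, ?_, ?_, ?_, ?_⟩
  · intro i hi
    simp only [hp'def, dif_pos hi]
    exact hp ⟨i, hi⟩
  · intro l hl
    rw [hsum_p'] at hl
    exact hmono l hl
  · intro l r h1 h2 h3
    rw [hsum_p'] at h3
    exact hsub l r h1 h2 h3
  · intro d hd
    set d' : Fin k → ℕ := fun i => d i.val with hd'def
    have hval' : val d' = ∑ i ∈ Finset.range k, (d i : ℝ) * α i := by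
      rw [hvaldef, ← Fin.sum_univ_eq_sum_range]
    have hS' : S = ∑ i ∈ Finset.range k, α i := by
      rw [hSdef, ← Fin.sum_univ_eq_sum_range]
    have hidx' : idx d' = ∑ i ∈ Finset.range k, d i * p' i := by
      rw [hidxdef, ← Fin.sum_univ_eq_sum_range]
      refine Finset.sum_congr rfl (fun i _ => ?_)
      simp [hp'def, hd'def, i.isLt]
    have hvd : val d' ≤ S := by rw [hval', hS']; exact hd
    obtain ⟨hidxle', haeq'⟩ := hspecial d' hvd
    constructor
    · rw [← hidx', hsum_p']
      exact hidxle'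
    · rw [← hidx', haeq', hval']
end

section
/- (Dirichlet's simultaneous approximation theorem) For all real numbers α_1, ..., α_k and every positive integer q_0, there exist an integer q > q_0 and integers p_1, ..., p_k such that |α_i - p_i/q| < 1/q^{1+1/k} for every 1 ≤ i ≤ k. -/
lemma dirichlet_box_core (k N : ℕ) (hN : 0 < N) (α : Fin k → ℝ)
    (a b : ℕ) (hab : a < b)
    (heq : ∀ i : Fin k, ⌊Int.fract ((a : ℝ) * α i) * N⌋ = ⌊Int.fract ((b : ℝ) * α i) * N⌋) :
    ∃ p : Fin k → ℤ, ∀ i, |((b - a : ℕ) : ℝ) * α i - (p i : ℝ)| < 1 / N := by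
  have hNR : (0 : ℝ) < N := by exact_mod_cast hN
  refine ⟨fun i => ⌊(b : ℝ) * α i⌋ - ⌊(a : ℝ) * α i⌋, fun i => ?_⟩
  have hc : ((b - a : ℕ) : ℝ) = (b : ℝ) - (a : ℝ) := by
    have := hab.le
    push_cast [Nat.cast_sub this]
    ring
  have key : |Int.fract ((b : ℝ) * α i) * N - Int.fract ((a : ℝ) * α i) * N| < 1 :=
    Int.abs_sub_lt_one_of_floor_eq_floor (heq i).symm
  have hexpand : ((b - a : ℕ) : ℝ) * α i - ((⌊(b : ℝ) * α i⌋ - ⌊(a : ℝ) * α i⌋ : ℤ) : ℝ)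
      = Int.fract ((b : ℝ) * α i) - Int.fract ((a : ℝ) * α i) := by
    rw [hc]
    unfold Int.fract
    push_cast
    ring
  rw [hexpand]
  rw [lt_div_iff₀ hNR]
  calc |Int.fract ((b : ℝ) * α i) - Int.fract ((a : ℝ) * α i)| * N
      = |Int.fract ((b : ℝ) * α i) * N - Int.fract ((a : ℝ) * α i) * N| := by
        rw [show Int.fract ((b : ℝ) * α i) * (N : ℝ) - Int.fract ((a : ℝ) * α i) * N
          = (Int.fract ((b : ℝ) * α i) - Int.fract ((a : ℝ) * α i)) * N by ring,
          abs_mul, abs_of_pos hNR]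
    _ < 1 := key

lemma dirichlet_box_aux (k N : ℕ) (hN : 0 < N) (α : Fin k → ℝ) :
    ∃ q : ℕ, 0 < q ∧ q ≤ N ^ k ∧ ∃ p : Fin k → ℤ,
      ∀ i, |(q : ℝ) * α i - (p i : ℝ)| < 1 / N := by
  have hbound : ∀ (m : Fin (N ^ k + 1)) (i : Fin k),
      (⌊Int.fract ((m : ℝ) * α i) * N⌋).toNat < N := by
    intro m i
    have hNR : (0 : ℝ) < N := by exact_mod_cast hN
    have h1 : ⌊Int.fract ((m : ℝ) * α i) * N⌋ < (N : ℤ) := by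
      apply Int.floor_lt.2
      push_cast
      have := Int.fract_lt_one ((m : ℝ) * α i)
      nlinarith
    omega
  set F : Fin (N ^ k + 1) → (Fin k → Fin N) :=
    fun m i => ⟨(⌊Int.fract ((m : ℝ) * α i) * N⌋).toNat, hbound m i⟩ with hF
  have hcard : Fintype.card (Fin k → Fin N) < Fintype.card (Fin (N ^ k + 1)) := by
    simp
  obtain ⟨a, b, hab, hFab⟩ := Fintype.exists_ne_map_eq_of_card_lt F hcard
  have hfl : ∀ (m : Fin (N ^ k + 1)) (i : Fin k), 0 ≤ ⌊Int.fract ((m : ℝ) * α i) * N⌋ := by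
    intro m i
    apply Int.floor_nonneg.2
    have h1 := Int.fract_nonneg ((m : ℝ) * α i)
    have hNR : (0 : ℝ) ≤ N := by positivity
    positivity
  have heq : ∀ i : Fin k,
      ⌊Int.fract ((a : ℝ) * α i) * N⌋ = ⌊Int.fract ((b : ℝ) * α i) * N⌋ := by
    intro i
    have := congrArg Fin.val (funext_iff.mp hFab i)
    simp only [hF] at this
    have h1 := hfl a i
    have h2 := hfl b i
    omega
  have hble : (b : ℕ) ≤ N ^ k := by omega
  have hale : (a : ℕ) ≤ N ^ k := by omega
  rcases lt_or_gt_of_ne (Fin.val_ne_of_ne hab) with h | h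
  · obtain ⟨p, hp⟩ := dirichlet_box_core k N hN α a b h heq
    exact ⟨b - a, by omega, by omega, p, hp⟩
  · obtain ⟨p, hp⟩ := dirichlet_box_core k N hN α b a h (fun i => (heq i).symm)
    exact ⟨a - b, by omega, by omega, p, hp⟩

/-- Dirichlet's simultaneous approximation theorem: for reals `α_1, …, α_k` and
any `q₀`, there is an integer `q > q₀` and integers `p_i` with
`|α_i - p_i/q| < 1/q^{1+1/k}` for all `i`. -/
theorem stmt_10 (k : ℕ) (hk : 0 < k) (α : Fin k → ℝ) (q₀ : ℕ) (hq₀ : 0 < q₀) :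
    ∃ q : ℕ, q₀ < q ∧ ∃ p : Fin k → ℤ,
      ∀ i : Fin k, |α i - (p i : ℝ) / (q : ℝ)| < 1 / (q : ℝ) ^ ((1 : ℝ) + 1 / k) := by
  by_cases hirr : ∃ j : Fin k, Irrational (α j)
  · obtain ⟨j, hj⟩ := hirr
    -- minimal distance of q * α j to nearest integer for q ≤ q₀
    have hne : (Finset.Icc 1 q₀).Nonempty := ⟨1, Finset.mem_Icc.2 ⟨le_refl 1, hq₀⟩⟩
    set ε : ℝ := (Finset.Icc 1 q₀).inf' hne
      (fun n => |(n : ℝ) * α j - (round ((n : ℝ) * α j) : ℝ)|) with hε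
    have hεpos : 0 < ε := by
      refine (Finset.lt_inf'_iff hne).2 ?_
      intro n hn
      simp only [Finset.mem_Icc] at hn
      have hirr' : Irrational ((n : ℝ) * α j) := by
        exact hj.natCast_mul (by omega)
      have : (n : ℝ) * α j ≠ (round ((n : ℝ) * α j) : ℝ) := hirr'.ne_int _
      exact abs_pos.2 (sub_ne_zero.2 this)
    set N : ℕ := ⌈1 / ε⌉₊ + 1 with hNdef
    have hNpos : 0 < N := by omega
    have hNR : (0 : ℝ) < N := by exact_mod_cast hNpos
    have hNε : 1 / (N : ℝ) < ε := by
      rw [div_lt_iff₀ hNR]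
      have h1 : (1 : ℝ) / ε < N := by
        calc (1 : ℝ) / ε ≤ ⌈1 / ε⌉₊ := Nat.le_ceil _
        _ < N := by push_cast [hNdef]; linarith
      calc (1 : ℝ) = ε * (1 / ε) := by field_simp
      _ < ε * N := by exact mul_lt_mul_of_pos_left h1 hεpos
    obtain ⟨q, hq0, hqN, p, hp⟩ := dirichlet_box_aux k N hNpos α
    have hqR : (0 : ℝ) < q := by exact_mod_cast hq0
    -- q > q₀
    have hqgt : q₀ < q := by
      by_contra hle
      push_neg at hle
      have hmem : q ∈ Finset.Icc 1 q₀ := Finset.mem_Icc.2 ⟨hq0, hle⟩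
      have h1 : ε ≤ |(q : ℝ) * α j - (round ((q : ℝ) * α j) : ℝ)| :=
        Finset.inf'_le _ hmem
      have h2 : |(q : ℝ) * α j - (round ((q : ℝ) * α j) : ℝ)| ≤ |(q : ℝ) * α j - (p j : ℝ)| :=
        round_le _ _
      have := hp j
      linarith
    refine ⟨q, hqgt, p, fun i => ?_⟩
    have hstep : |α i - (p i : ℝ) / q| < 1 / (N * q) := by
      have heq2 : α i - (p i : ℝ) / q = ((q : ℝ) * α i - (p i : ℝ)) / q := by
        field_simp
      rw [heq2, abs_div, abs_of_pos hqR, div_lt_div_iff₀ hqR (by positivity)]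
      have := hp i
      calc |(q : ℝ) * α i - (p i : ℝ)| * (N * q) < (1 / N) * (N * q) := by
            apply mul_lt_mul_of_pos_right this (by positivity)
        _ = 1 * q := by field_simp
      
    -- q ^ (1 + 1/k) ≤ N * q
    have hk' : (k : ℝ) ≠ 0 := by exact_mod_cast hk.ne'
    have hpow : (q : ℝ) ^ ((1 : ℝ) + 1 / k) ≤ N * q := by
      rw [Real.rpow_add hqR, Real.rpow_one]
      have h1 : (q : ℝ) ^ ((1 : ℝ) / k) ≤ N := by
        have hqNk : (q : ℝ) ≤ (N : ℝ) ^ (k : ℕ) := by exact_mod_cast hqN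
        calc (q : ℝ) ^ ((1 : ℝ) / k) ≤ ((N : ℝ) ^ (k : ℕ)) ^ ((1 : ℝ) / k) := by
              apply Real.rpow_le_rpow (le_of_lt hqR) hqNk (by positivity)
          _ = (N : ℝ) ^ ((k : ℝ) * (1 / k)) := by
              rw [← Real.rpow_natCast (N : ℝ) k, ← Real.rpow_mul (le_of_lt hNR)]
          _ = N := by rw [mul_one_div_cancel hk', Real.rpow_one]
      calc (q : ℝ) * (q : ℝ) ^ ((1 : ℝ) / k) ≤ q * N :=
            mul_le_mul_of_nonneg_left h1 (le_of_lt hqR)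
        _ = N * q := by ring
    have hpowpos : (0 : ℝ) < (q : ℝ) ^ ((1 : ℝ) + 1 / k) := Real.rpow_pos_of_pos hqR _
    calc |α i - (p i : ℝ) / q| < 1 / (N * q) := hstep
      _ ≤ 1 / (q : ℝ) ^ ((1 : ℝ) + 1 / k) := by
          apply one_div_le_one_div_of_le hpowpos hpow
  · -- all rational
    push_neg at hirr
    have hrat : ∀ i, ∃ r : ℚ, α i = (r : ℝ) := by
      intro i
      have := hirr i
      rw [Irrational] at this
      push_neg at this
      obtain ⟨r, hr⟩ := not_not.mp (by simpa [Set.mem_range] using this)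
      exact ⟨r, hr.symm⟩
    choose r hr using hrat
    set d : ℕ := ∏ i, (r i).den with hd
    have hdpos : 0 < d := Finset.prod_pos (fun i _ => (r i).pos)
    have hqpos : 0 < (q₀ + 1) * d := by positivity
    have hqR : (0 : ℝ) < (((q₀ + 1) * d : ℕ) : ℝ) := by exact_mod_cast hqpos
    have hpex : ∀ i, ∃ pi : ℤ, α i * (((q₀ + 1) * d : ℕ) : ℝ) = (pi : ℝ) := by
      intro i
      have hdvd : (r i).den ∣ d := Finset.dvd_prod_of_mem _ (Finset.mem_univ i)
      obtain ⟨m, hm⟩ := hdvd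
      refine ⟨(r i).num * (q₀ + 1) * m, ?_⟩
      rw [hr i, Rat.cast_def]
      have hden : ((r i).den : ℝ) ≠ 0 := by exact_mod_cast (r i).pos.ne'
      push_cast [hm]
      field_simp
    choose p hp using hpex
    refine ⟨(q₀ + 1) * d, ?_, p, fun i => ?_⟩
    · calc q₀ < q₀ + 1 := by omega
        _ ≤ (q₀ + 1) * d := Nat.le_mul_of_pos_right _ hdpos
    · have hzero : α i - (p i : ℝ) / (((q₀ + 1) * d : ℕ) : ℝ) = 0 := by
        rw [sub_eq_zero, eq_div_iff hqR.ne']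
        exact hp i
      rw [hzero, abs_zero]
      positivity
end

section
/- Every finite metric space with at least two points is exponentially ℓ∞-Ramsey: for every finite metric space M with |M| ≥ 2 there exists a constant χ_M > 1 such that χ(R^n_∞; M) ≥ (χ_M + o(1))^n as n → ∞. -/
open Finset

namespace Stmt13

section ConsDist
variable {α : Type*} [PseudoMetricSpace α]

lemma dist_fin_cons {n : ℕ} (a b : α) (x y : Fin n → α) :
    dist (Fin.cons a x : Fin (n+1) → α) (Fin.cons b y) = max (dist a b) (dist x y) := by
  apply le_antisymm
  · refine (dist_pi_le_iff (le_max_of_le_left dist_nonneg)).2 ?_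
    intro i
    refine Fin.cases ?_ ?_ i
    · simpa using le_max_left (dist a b) (dist x y)
    · intro j
      simp only [Fin.cons_succ]
      exact le_trans (dist_le_pi_dist x y j) (le_max_right _ _)
  · apply max_le
    · simpa using dist_le_pi_dist (Fin.cons a x : Fin (n+1) → α) (Fin.cons b y) 0
    · refine (dist_pi_le_iff dist_nonneg).2 fun j => ?_
      simpa using dist_le_pi_dist (Fin.cons a x : Fin (n+1) → α) (Fin.cons b y) j.succ

end ConsDist

section Slice
variable {β : Type*} [DecidableEq β]

def slice {n : ℕ} (T : Finset (Fin (n+1) → β)) (a : β) : Finset (Fin n → β) :=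
  (T.filter fun x => x 0 = a).image Fin.tail

lemma mem_slice {n : ℕ} {T : Finset (Fin (n+1) → β)} {a : β} {y : Fin n → β} :
    y ∈ slice T a ↔ Fin.cons a y ∈ T := by
  constructor
  · intro h
    simp only [slice, mem_image, mem_filter] at h
    obtain ⟨x, ⟨hxT, hx0⟩, hxy⟩ := h
    have hx : Fin.cons a y = x := by
      rw [← hx0, ← hxy]; exact Fin.cons_self_tail x
    rwa [hx]
  · intro h
    simp only [slice, mem_image, mem_filter]
    exact ⟨Fin.cons a y, ⟨h, Fin.cons_zero _ _⟩, Fin.tail_cons _ _⟩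

def interJ {n : ℕ} (T : Finset (Fin (n+1) → β)) (S : Finset β) : Finset (Fin n → β) :=
  (T.image Fin.tail).filter fun y => ∀ a ∈ S, Fin.cons a y ∈ T

lemma mem_interJ {n : ℕ} {T : Finset (Fin (n+1) → β)} {S : Finset β} (hS : S.Nonempty)
    {y : Fin n → β} : y ∈ interJ T S ↔ ∀ a ∈ S, Fin.cons a y ∈ T := by
  simp only [interJ, mem_filter, mem_image]
  constructor
  · tauto
  · intro h
    exact ⟨⟨Fin.cons hS.choose y, h _ hS.choose_spec, Fin.tail_cons _ _⟩, h⟩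

lemma slice_subset {n : ℕ} (T : Finset (Fin (n+1) → β)) (a : β) :
    slice T a ⊆ T.image Fin.tail := by
  intro y hy
  rw [mem_slice] at hy
  exact mem_image.2 ⟨_, hy, Fin.tail_cons _ _⟩

lemma interJ_insert {n : ℕ} {T : Finset (Fin (n+1) → β)} {S : Finset β} {g : β} :
    interJ T (insert g S) = interJ T S ∩ slice T g := by
  ext y
  simp only [interJ, mem_inter, mem_filter, mem_slice, mem_insert]
  constructor
  · rintro ⟨hΩ, h⟩
    exact ⟨⟨hΩ, fun a ha => h a (Or.inr ha)⟩, h g (Or.inl rfl)⟩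
  · rintro ⟨⟨hΩ, h⟩, hg⟩
    refine ⟨hΩ, ?_⟩
    rintro a (rfl | ha)
    exacts [hg, h a ha]

lemma interJ_singleton {n : ℕ} (T : Finset (Fin (n+1) → β)) (a : β) :
    interJ T {a} = slice T a := by
  have h1 : ({a} : Finset β) = insert a ∅ := rfl
  have hempty : interJ T (∅ : Finset β) = T.image Fin.tail := by
    simp [interJ]
  rw [h1, interJ_insert, hempty]
  exact inter_eq_right.mpr (slice_subset T a)

end Slice

section Inner
variable {β : Type*} [PseudoMetricSpace β] [DecidableEq β]

lemma inner_count {n : ℕ}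
    (T : Finset (Fin (n+1) → β)) (G : Finset β) (r : ℝ) (ψ : β → ℕ) (g₀ : β) (B : ℕ)
    (HB : ∀ y gg, y ∈ G → gg ∈ G → dist y gg ≤ r →
      ∀ I : Finset (Fin n → β), I ⊆ slice T y → (I ∪ slice T gg).card ≤ B) :
    ∀ (k : ℕ) (S : Finset β), S.card ≤ k → S ⊆ G →
      (∀ x ∈ S, x ≠ g₀ → ∃ y ∈ S, ψ y < ψ x ∧ dist x y ≤ r) → S.Nonempty →
      ∑ a ∈ S, (slice T a).card ≤ (S.card - 1) * B + (interJ T S).card := by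
  intro k
  induction k with
  | zero =>
    intro S hk _ _ hne
    exact absurd (Finset.card_pos.mpr hne) (by omega)
  | succ k ih =>
    intro S hk hsub hinv hne
    rcases Nat.lt_or_ge S.card 2 with h2 | h2
    · have h1 : S.card = 1 := by
        have := Finset.card_pos.mpr hne; omega
      obtain ⟨a, rfl⟩ := Finset.card_eq_one.mp h1
      rw [Finset.sum_singleton, interJ_singleton]
      simp
    · obtain ⟨g, hgS, hgmax⟩ := Finset.exists_max_image S ψ hne
      have hgne : g ≠ g₀ := by
        intro hgg
        obtain ⟨z, hzS, hzmin⟩ := Finset.exists_min_image S ψ hne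
        have hzg : z = g₀ := by
          by_contra hz
          obtain ⟨y, hyS, hylt, _⟩ := hinv z hzS hz
          exact absurd (hzmin y hyS) (by omega)
        obtain ⟨x, hxS, hxg⟩ := Finset.exists_mem_ne h2 g
        obtain ⟨y, hyS, hylt, _⟩ := hinv x hxS (by rw [← hgg]; exact hxg)
        have hb1 := hzmin y hyS
        have hb2 := hgmax x hxS
        rw [hzg, ← hgg] at hb1
        omega
      obtain ⟨y, hyS, hylt, hydist⟩ := hinv g hgS hgne
      have hyS' : y ∈ S.erase g :=
        Finset.mem_erase.mpr ⟨by intro h; rw [h] at hylt; omega, hyS⟩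
      have hES : (S.erase g).card = S.card - 1 := Finset.card_erase_of_mem hgS
      have hinv' : ∀ x ∈ S.erase g, x ≠ g₀ → ∃ y' ∈ S.erase g, ψ y' < ψ x ∧ dist x y' ≤ r := by
        intro x hxS' hx
        obtain ⟨y', hy'S, hy'lt, hy'd⟩ := hinv x (Finset.mem_of_mem_erase hxS') hx
        refine ⟨y', Finset.mem_erase.mpr ⟨?_, hy'S⟩, hy'lt, hy'd⟩
        intro h
        rw [h] at hy'lt
        have := hgmax x (Finset.mem_of_mem_erase hxS')
        omega
      have hih := ih (S.erase g) (by omega)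
        (fun z hz => hsub (Finset.mem_of_mem_erase hz)) hinv' ⟨y, hyS'⟩
      rw [hES] at hih
      have hJsub : interJ T (S.erase g) ⊆ slice T y := by
        intro z hz
        exact mem_slice.mpr ((mem_interJ ⟨y, hyS'⟩).mp hz y hyS')
      have hHB := HB y g (hsub hyS) (hsub hgS) (by rwa [dist_comm] at hydist) _ hJsub
      have hins : interJ T (S.erase g) ∩ slice T g = interJ T S := by
        rw [← interJ_insert, Finset.insert_erase hgS]
      have hcards : (interJ T (S.erase g)).card + (slice T g).card
          = (interJ T (S.erase g) ∪ slice T g).card + (interJ T S).card := by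
        rw [← hins]
        exact (Finset.card_union_add_card_inter _ _).symm
      have harith : (S.card - 1 - 1) * B + B = (S.card - 1) * B := by
        have h : S.card - 1 = (S.card - 1 - 1) + 1 := by omega
        conv_rhs => rw [h]
        exact (add_one_mul _ _).symm
      calc ∑ a ∈ S, (slice T a).card
          = ∑ a ∈ S.erase g, (slice T a).card + (slice T g).card :=
            (Finset.sum_erase_add S _ hgS).symm
        _ ≤ ((S.card - 1 - 1) * B + (interJ T (S.erase g)).card) + (slice T g).card :=
            Nat.add_le_add_right hih _
        _ = (S.card - 1 - 1) * B + ((interJ T (S.erase g)).card + (slice T g).card) :=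
            add_assoc _ _ _
        _ = (S.card - 1 - 1) * B
            + ((interJ T (S.erase g) ∪ slice T g).card + (interJ T S).card) := by
            rw [hcards]
        _ ≤ (S.card - 1 - 1) * B + (B + (interJ T S).card) :=
            Nat.add_le_add_left (Nat.add_le_add_right hHB _) _
        _ = ((S.card - 1 - 1) * B + B) + (interJ T S).card := (add_assoc _ _ _).symm
        _ = (S.card - 1) * B + (interJ T S).card := by rw [harith]

lemma key {M : Type*} [PseudoMetricSpace M] [Nonempty M]
    (G : Finset β) (r : ℝ) (ψ : β → ℕ) (g₀ : β)
    (hconn : ∀ x ∈ G, x ≠ g₀ → ∃ y ∈ G, ψ y < ψ x ∧ dist x y ≤ r)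
    (F : M → β) (hF : ∀ p q : M, dist (F p) (F q) = dist p q)
    (hFG : ∀ p, F p ∈ G)
    (hrmin : ∀ p q : M, p ≠ q → r ≤ dist p q) :
    ∀ (n : ℕ) (T : Finset (Fin n → β)),
      (∀ x ∈ T, ∀ i, x i ∈ G) →
      (∀ f : M → (Fin n → β), (∀ p, f p ∈ T) →
        (∀ p q, dist (f p) (f q) = dist p q) → False) →
      T.card ≤ (G.card - 1) ^ n := by
  intro n
  induction n with
  | zero =>
    intro T _ _
    simp only [pow_zero]
    refine Finset.card_le_one.mpr fun x _ y _ => ?_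
    exact funext fun i => i.elim0
  | succ n ih =>
    intro T hgrid hnc
    have HB : ∀ y gg, y ∈ G → gg ∈ G → dist y gg ≤ r →
        ∀ I : Finset (Fin n → β), I ⊆ slice T y →
          (I ∪ slice T gg).card ≤ (G.card - 1) ^ n := by
      intro y gg hyG hggG hdist I hI
      apply ih
      · intro x hx i
        rcases Finset.mem_union.mp hx with h | h
        · have hm : Fin.cons y x ∈ T := mem_slice.mp (hI h)
          simpa using hgrid _ hm i.succ
        · have hm : Fin.cons gg x ∈ T := mem_slice.mp h
          simpa using hgrid _ hm i.succ
      · intro f hfmem hfiso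
        have hmem : ∀ p, Fin.cons (if f p ∈ I then y else gg) (f p) ∈ T := by
          intro p
          by_cases h : f p ∈ I
          · rw [if_pos h]; exact mem_slice.mp (hI h)
          · rw [if_neg h]
            rcases Finset.mem_union.mp (hfmem p) with h' | h'
            · exact absurd h' h
            · exact mem_slice.mp h'
        apply hnc (fun p => Fin.cons (if f p ∈ I then y else gg) (f p)) hmem
        intro p q
        rw [dist_fin_cons, hfiso]
        refine max_eq_right ?_
        by_cases hpq : p = q
        · subst hpq; simp
        · by_cases h1 : f p ∈ I <;> by_cases h2 : f q ∈ I
          · rw [if_pos h1, if_pos h2, dist_self]; exact dist_nonneg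
          · rw [if_pos h1, if_neg h2]; exact le_trans hdist (hrmin p q hpq)
          · rw [if_neg h1, if_pos h2, dist_comm]; exact le_trans hdist (hrmin p q hpq)
          · rw [if_neg h1, if_neg h2, dist_self]; exact dist_nonneg
    have hGne : G.Nonempty := ⟨F (Classical.arbitrary M), hFG _⟩
    have hfib : T.card = ∑ a ∈ G, ((T.filter fun x => x 0 = a)).card :=
      Finset.card_eq_sum_card_fiberwise fun x hx => hgrid x hx 0
    have hslice : ∀ a : β, ((T.filter fun x => x 0 = a)).card = (slice T a).card := by
      intro a
      refine (Finset.card_image_of_injOn ?_).symm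
      intro x hx y hy hxy
      have hx0 : x 0 = a := (Finset.mem_filter.mp hx).2
      have hy0 : y 0 = a := (Finset.mem_filter.mp hy).2
      calc x = Fin.cons (x 0) (Fin.tail x) := (Fin.cons_self_tail x).symm
        _ = Fin.cons (y 0) (Fin.tail y) := by rw [hx0, hy0, hxy]
        _ = y := Fin.cons_self_tail y
    have hinner := inner_count T G r ψ g₀ ((G.card - 1) ^ n) HB G.card G (le_refl _)
      (Finset.Subset.refl _) hconn hGne
    have hJG : interJ T G = ∅ := by
      by_contra h
      obtain ⟨z, hz⟩ := Finset.nonempty_of_ne_empty h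
      have hz' := (mem_interJ hGne).mp hz
      apply hnc (fun p => Fin.cons (F p) z) (fun p => hz' (F p) (hFG p))
      intro p q
      rw [dist_fin_cons, hF, dist_self]
      exact max_eq_left dist_nonneg
    calc T.card = ∑ a ∈ G, ((T.filter fun x => x 0 = a)).card := hfib
      _ = ∑ a ∈ G, (slice T a).card := Finset.sum_congr rfl fun a _ => hslice a
      _ ≤ (G.card - 1) * (G.card - 1) ^ n + (interJ T G).card := hinner
      _ = (G.card - 1) ^ (n + 1) := by
          rw [hJG, Finset.card_empty, add_zero, pow_succ, mul_comm]

end Inner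

section Pad

def pad (m q n : ℕ) (hm : 0 < m) (h : q * m ≤ n) (x : Fin q → Fin m → ℝ) : Fin n → ℝ :=
  fun i => if hi : (i : ℕ) < q * m
    then x ⟨(i : ℕ) / m, (Nat.div_lt_iff_lt_mul hm).2 hi⟩ ⟨(i : ℕ) % m, Nat.mod_lt _ hm⟩
    else 0

lemma pad_dist (m q n : ℕ) (hm : 0 < m) (h : q * m ≤ n) (x y : Fin q → Fin m → ℝ) :
    dist (pad m q n hm h x) (pad m q n hm h y) = dist x y := by
  apply le_antisymm
  · refine (dist_pi_le_iff dist_nonneg).2 fun i => ?_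
    by_cases hi : (i : ℕ) < q * m
    · simp only [pad, dif_pos hi]
      exact le_trans (dist_le_pi_dist _ _ _) (dist_le_pi_dist x y _)
    · simp only [pad, dif_neg hi, dist_self]
      exact dist_nonneg
  · refine (dist_pi_le_iff dist_nonneg).2 fun j => ?_
    refine (dist_pi_le_iff dist_nonneg).2 fun t => ?_
    have hi : (t : ℕ) + (j : ℕ) * m < q * m := by
      have h1 : (t : ℕ) < m := t.isLt
      have h3 : ((j : ℕ) + 1) * m ≤ q * m := Nat.mul_le_mul_right m j.isLt
      have h4 : ((j : ℕ) + 1) * m = (j : ℕ) * m + m := by ring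
      omega
    have hdiv : ((t : ℕ) + (j : ℕ) * m) / m = (j : ℕ) := by
      rw [Nat.add_mul_div_right _ _ hm, Nat.div_eq_of_lt t.isLt, Nat.zero_add]
    have hmod : ((t : ℕ) + (j : ℕ) * m) % m = (t : ℕ) := by
      rw [Nat.add_mul_mod_self_right, Nat.mod_eq_of_lt t.isLt]
    have hpx : ∀ z : Fin q → Fin m → ℝ,
        pad m q n hm h z ⟨(t : ℕ) + (j : ℕ) * m, lt_of_lt_of_le hi h⟩ = z j t := by
      intro z
      simp only [pad, dif_pos hi]
      congr 1
      · exact Fin.ext hdiv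
      · exact Fin.ext hmod
    calc dist (x j t) (y j t)
        = dist (pad m q n hm h x ⟨(t : ℕ) + (j : ℕ) * m, lt_of_lt_of_le hi h⟩)
            (pad m q n hm h y ⟨(t : ℕ) + (j : ℕ) * m, lt_of_lt_of_le hi h⟩) := by
          rw [hpx, hpx]
      _ ≤ dist (pad m q n hm h x) (pad m q n hm h y) := dist_le_pi_dist _ _ _

end Pad

section MainBound

lemma main_bound (M : Type*) [MetricSpace M] [Fintype M] (hM : 2 ≤ Fintype.card M) :
    ∃ g : ℕ, 2 ≤ g ∧
      ∀ (q N : ℕ), N * (g - 1) ^ q < g ^ q →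
        ∀ c : (Fin q → Fin (Fintype.card M) → ℝ) → Fin N,
          ∃ f : M → (Fin q → Fin (Fintype.card M) → ℝ),
            (∀ x y, c (f x) = c (f y)) ∧ ∀ x y, dist (f x) (f y) = dist x y := by
  classical
  haveI hne : Nonempty M := Fintype.card_pos_iff.mp (by omega)
  set m := Fintype.card M with hm_def
  let e : Fin m ≃ M := (Fintype.equivFin M).symm
  have hOD : (Finset.univ.offDiag : Finset (M × M)).Nonempty := by
    obtain ⟨a, b, hab⟩ := Fintype.exists_pair_of_one_lt_card (α := M) (by omega)
    exact ⟨(a, b), Finset.mem_offDiag.mpr ⟨Finset.mem_univ _, Finset.mem_univ _, hab⟩⟩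
  set r := Finset.inf' _ hOD (fun pq : M × M => dist pq.1 pq.2) with hr_def
  have hr0 : 0 < r := by
    rw [hr_def, Finset.lt_inf'_iff]
    rintro ⟨p, q⟩ hpq
    exact dist_pos.mpr (Finset.mem_offDiag.mp hpq).2.2
  have hrmin : ∀ p q : M, p ≠ q → r ≤ dist p q := by
    intro p q hpq
    have hmem : ((p, q) : M × M) ∈ (Finset.univ.offDiag : Finset (M × M)) :=
      Finset.mem_offDiag.mpr ⟨Finset.mem_univ _, Finset.mem_univ _, hpq⟩
    rw [hr_def]
    exact Finset.inf'_le (fun pq : M × M => dist pq.1 pq.2) hmem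
  set D := Finset.sup' _ hOD (fun pq : M × M => dist pq.1 pq.2) with hD_def
  have hD : ∀ p q : M, dist p q ≤ D := by
    intro p q
    by_cases hpq : p = q
    · subst hpq
      rw [dist_self]
      obtain ⟨pq0, h0⟩ := hOD
      have h1 : r ≤ dist pq0.1 pq0.2 :=
        hrmin _ _ (Finset.mem_offDiag.mp h0).2.2
      have h2 : dist pq0.1 pq0.2 ≤ D := by
        rw [hD_def]
        exact Finset.le_sup' (fun pq : M × M => dist pq.1 pq.2) h0
      exact le_trans (le_trans hr0.le h1) h2
    · have hmem : ((p, q) : M × M) ∈ (Finset.univ.offDiag : Finset (M × M)) :=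
        Finset.mem_offDiag.mpr ⟨Finset.mem_univ _, Finset.mem_univ _, hpq⟩
      rw [hD_def]
      exact Finset.le_sup' (fun pq : M × M => dist pq.1 pq.2) hmem
  set s := ⌈D / r⌉₊ with hs_def
  have hsD : D ≤ (s : ℝ) * r := by
    have h1 : D / r ≤ (s : ℝ) := Nat.le_ceil _
    calc D = D / r * r := by field_simp
      _ ≤ (s : ℝ) * r := mul_le_mul_of_nonneg_right h1 hr0.le
  set A : Fin m → Finset ℝ := fun j =>
    (Finset.univ.image fun p : M => dist p (e j))
      ∪ ((Finset.range (s + 1)).image fun i : ℕ => (i : ℝ) * r) with hA_def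
  have hA0 : ∀ j, ∀ a ∈ A j, 0 ≤ a := by
    intro j a ha
    rcases Finset.mem_union.mp ha with h | h
    · obtain ⟨p, _, rfl⟩ := Finset.mem_image.mp h; exact dist_nonneg
    · obtain ⟨i, _, rfl⟩ := Finset.mem_image.mp h; positivity
  have hAle : ∀ j, ∀ a ∈ A j, a ≤ (s : ℝ) * r := by
    intro j a ha
    rcases Finset.mem_union.mp ha with h | h
    · obtain ⟨p, _, rfl⟩ := Finset.mem_image.mp h
      exact le_trans (hD _ _) hsD
    · obtain ⟨i, hi, rfl⟩ := Finset.mem_image.mp h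
      have : (i : ℝ) ≤ (s : ℝ) := by
        exact_mod_cast Nat.le_of_lt_succ (Finset.mem_range.mp hi)
      exact mul_le_mul_of_nonneg_right this hr0.le
  set G : Finset (Fin m → ℝ) := Fintype.piFinset A with hG_def
  set F : M → (Fin m → ℝ) := fun p j => dist p (e j) with hF_def
  have hFG : ∀ p, F p ∈ G := by
    intro p
    rw [hG_def, Fintype.mem_piFinset]
    intro j
    exact Finset.mem_union_left _ (Finset.mem_image.mpr ⟨p, Finset.mem_univ _, rfl⟩)
  have hF : ∀ p q : M, dist (F p) (F q) = dist p q := by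
    intro p q
    apply le_antisymm
    · refine (dist_pi_le_iff dist_nonneg).2 fun j => ?_
      rw [hF_def]
      simp only
      rw [Real.dist_eq]
      exact abs_dist_sub_le p q (e j)
    · have hj := dist_le_pi_dist (F p) (F q) (e.symm q)
      have heq : dist (F p (e.symm q)) (F q (e.symm q)) = dist p q := by
        rw [hF_def]
        simp only [e.apply_symm_apply]
        rw [dist_self, Real.dist_eq, sub_zero, abs_of_nonneg dist_nonneg]
      rwa [heq] at hj
  set ψ : (Fin m → ℝ) → ℕ := fun b => ∑ j, ((A j).filter fun u => u < b j).card with hψ_def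
  set g₀ : Fin m → ℝ := fun _ => (0 : ℝ) with hg₀_def
  have hconn : ∀ x ∈ G, x ≠ g₀ → ∃ y ∈ G, ψ y < ψ x ∧ dist x y ≤ r := by
    intro x hxG hxne
    have hxA : ∀ j, x j ∈ A j := (Fintype.mem_piFinset).mp hxG
    obtain ⟨j, hj⟩ : ∃ j, x j ≠ 0 := by
      by_contra hcon
      push_neg at hcon
      exact hxne (funext fun j => hcon j)
    have hxj0 : 0 < x j := lt_of_le_of_ne (hA0 j _ (hxA j)) (Ne.symm hj)
    set i := ⌈x j / r⌉₊ with hi_def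
    have hi1 : 1 ≤ i := by
      rw [hi_def]
      exact Nat.one_le_iff_ne_zero.mpr (Nat.pos_iff_ne_zero.mp
        (Nat.ceil_pos.mpr (div_pos hxj0 hr0)))
    set a := ((i - 1 : ℕ) : ℝ) * r with ha_def
    have hcast : ((i - 1 : ℕ) : ℝ) = (i : ℝ) - 1 := by
      rw [Nat.cast_sub hi1, Nat.cast_one]
    have halt : a < x j := by
      rw [ha_def, hcast]
      have h1 : (i : ℝ) < x j / r + 1 := Nat.ceil_lt_add_one (by positivity)
      have h2 : ((i : ℝ) - 1) * r < (x j / r) * r := by nlinarith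
      calc ((i : ℝ) - 1) * r < (x j / r) * r := h2
        _ = x j := by field_simp
    have hage : x j - r ≤ a := by
      rw [ha_def, hcast]
      have h1 : x j / r ≤ (i : ℝ) := Nat.le_ceil _
      have h2 : x j = x j / r * r := by field_simp
      nlinarith
    have haA : a ∈ A j := by
      apply Finset.mem_union_right
      apply Finset.mem_image.mpr
      refine ⟨i - 1, Finset.mem_range.mpr ?_, rfl⟩
      have hxle : x j ≤ (s : ℝ) * r := hAle j _ (hxA j)
      have h3 : ((i - 1 : ℕ) : ℝ) * r < (s : ℝ) * r := by
        rw [← ha_def]; exact lt_of_lt_of_le halt hxle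
      have h4 : ((i - 1 : ℕ) : ℝ) < (s : ℝ) := lt_of_mul_lt_mul_right h3 hr0.le
      have h5 : (i - 1 : ℕ) < s := by exact_mod_cast h4
      omega
    refine ⟨Function.update x j a, ?_, ?_, ?_⟩
    · rw [hG_def, Fintype.mem_piFinset]
      intro kk
      by_cases hkk : kk = j
      · subst hkk; rw [Function.update_self]; exact haA
      · rw [Function.update_of_ne hkk]; exact hxA kk
    · rw [hψ_def]
      simp only
      apply Finset.sum_lt_sum
      · intro kk _
        by_cases hkk : kk = j
        · subst hkk
          rw [Function.update_self]
          apply Finset.card_le_card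
          intro u hu
          rw [Finset.mem_filter] at hu ⊢
          exact ⟨hu.1, lt_trans hu.2 halt⟩
        · rw [Function.update_of_ne hkk]
      · refine ⟨j, Finset.mem_univ _, ?_⟩
        rw [Function.update_self]
        apply Finset.card_lt_card
        rw [Finset.ssubset_iff_of_subset]
        · refine ⟨a, ?_, ?_⟩
          · rw [Finset.mem_filter]; exact ⟨haA, halt⟩
          · rw [Finset.mem_filter]; push_neg; intro _; exact le_refl a
        · intro u hu
          rw [Finset.mem_filter] at hu ⊢
          exact ⟨hu.1, lt_trans hu.2 halt⟩
    · refine (dist_pi_le_iff hr0.le).2 fun kk => ?_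
      by_cases hkk : kk = j
      · subst hkk
        rw [Function.update_self, Real.dist_eq, abs_of_nonneg (by linarith)]
        linarith
      · rw [Function.update_of_ne hkk, dist_self]
        exact hr0.le
  have hG2 : 2 ≤ G.card := by
    obtain ⟨p, q, hpq⟩ := Fintype.exists_pair_of_one_lt_card (α := M) (by omega)
    have hFne : F p ≠ F q := by
      intro h
      have h1 := hF p q
      rw [h, dist_self] at h1
      exact hpq (dist_eq_zero.mp h1.symm)
    exact Finset.one_lt_card.mpr ⟨F p, hFG p, F q, hFG q, hFne⟩
  refine ⟨G.card, hG2, ?_⟩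
  intro q N hN c
  by_contra hno
  push_neg at hno
  set Γ : Finset (Fin q → Fin m → ℝ) := Fintype.piFinset (fun _ => G) with hΓ_def
  have hcardΓ : Γ.card = G.card ^ q := by
    rw [hΓ_def, Fintype.card_piFinset]
    simp
  have hclass : ∀ ν : Fin N, ((Γ.filter fun x => c x = ν)).card ≤ (G.card - 1) ^ q := by
    intro ν
    apply key G r ψ g₀ hconn F hF hFG hrmin q
    · intro x hx i
      exact (Fintype.mem_piFinset).mp (Finset.mem_filter.mp hx).1 i
    · intro f hf hiso
      have hcc : ∀ x y : M, c (f x) = c (f y) := by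
        intro x y
        have hx := (Finset.mem_filter.mp (hf x)).2
        have hy := (Finset.mem_filter.mp (hf y)).2
        rw [hx, hy]
      obtain ⟨x, y, hxy⟩ := hno f hcc
      exact hxy (hiso x y)
  have hsum : Γ.card ≤ N * (G.card - 1) ^ q := by
    rw [Finset.card_eq_sum_card_fiberwise (f := c) (fun x _ => Finset.mem_univ (c x))]
    calc ∑ ν ∈ Finset.univ, ((Γ.filter fun x => c x = ν)).card
        ≤ (Finset.univ : Finset (Fin N)).card • ((G.card - 1) ^ q) :=
          Finset.sum_le_card_nsmul _ _ _ fun ν _ => hclass ν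
      _ = N * (G.card - 1) ^ q := by
          rw [Finset.card_univ, Fintype.card_fin, smul_eq_mul]
  rw [hcardΓ] at hsum
  exact absurd (lt_of_le_of_lt hsum hN) (lt_irrefl _)

end MainBound

end Stmt13

/-- Main theorem: every finite metric space `M` with at least two points is
exponentially `ℓ∞`-Ramsey: there are `χ_M > 1` and `δ(n) → 0` such that any
coloring of `ℝ^n` (Chebyshev metric) with fewer than `(χ_M + δ n)^n` colors
contains a monochromatic isometric copy of `M`. -/
theorem stmt_13 (M : Type*) [MetricSpace M] [Fintype M]
    (hM : 2 ≤ Fintype.card M) :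
    ∃ χ : ℝ, 1 < χ ∧ ∃ δ : ℕ → ℝ,
      Filter.Tendsto δ Filter.atTop (nhds 0) ∧
      ∀ n : ℕ, 0 < n → ∀ N : ℕ, (N : ℝ) < (χ + δ n) ^ n →
        ∀ c : (Fin n → ℝ) → Fin N,
          ∃ f : M → (Fin n → ℝ),
            (∀ x y : M, c (f x) = c (f y)) ∧
            ∀ x y : M, dist (f x) (f y) = dist x y := by
  classical
  obtain ⟨g, hg2, hmain⟩ := Stmt13.main_bound M hM
  set m := Fintype.card M with hm_def
  have hm0 : 0 < m := by omega
  have hm0R : (0 : ℝ) < (m : ℝ) := by exact_mod_cast hm0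
  set χ₀ : ℝ := (g : ℝ) / ((g : ℝ) - 1) with hchi0_def
  have hg1R : (1 : ℝ) ≤ (g : ℝ) - 1 := by
    have h : (2 : ℝ) ≤ (g : ℝ) := by exact_mod_cast hg2
    linarith
  have hgpos : (0 : ℝ) < (g : ℝ) - 1 := by linarith
  have hchi01 : 1 < χ₀ := by
    rw [hchi0_def, lt_div_iff₀ hgpos]
    linarith
  have hchi00 : 0 < χ₀ := lt_trans one_pos hchi01
  set χ : ℝ := χ₀ ^ ((m : ℝ)⁻¹) with hchi_def
  have hχ1 : 1 < χ := by
    rw [hchi_def]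
    exact Real.one_lt_rpow_iff_of_pos hchi00 |>.mpr (Or.inl ⟨hchi01, by positivity⟩)
  have hχ0 : 0 < χ := lt_trans one_pos hχ1
  refine ⟨χ, hχ1, fun k => χ * (χ₀ ^ (-(k : ℝ)⁻¹) - 1), ?_, ?_⟩
  · have h1 : Filter.Tendsto (fun k : ℕ => -((k : ℝ))⁻¹) Filter.atTop (nhds 0) := by
      have := (tendsto_one_div_atTop_nhds_zero_nat (𝕜 := ℝ)).neg
      simpa [one_div] using this
    have hrw : (fun k : ℕ => χ₀ ^ (-(k : ℝ)⁻¹))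
        = fun k : ℕ => Real.exp (Real.log χ₀ * (-(k : ℝ)⁻¹)) := by
      funext k
      rw [Real.rpow_def_of_pos hchi00]
    have h3 : Filter.Tendsto (fun k : ℕ => Real.log χ₀ * (-(k : ℝ)⁻¹))
        Filter.atTop (nhds 0) := by
      simpa using h1.const_mul (Real.log χ₀)
    have h2 : Filter.Tendsto (fun k : ℕ => χ₀ ^ (-(k : ℝ)⁻¹)) Filter.atTop (nhds 1) := by
      rw [hrw]
      have := (Real.continuous_exp.continuousAt (x := (0 : ℝ))).tendsto.comp h3
      simpa [Function.comp_def] using this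
    have h4 : Filter.Tendsto (fun k : ℕ => χ * (χ₀ ^ (-(k : ℝ)⁻¹) - 1))
        Filter.atTop (nhds (χ * (1 - 1))) :=
      ((h2.sub tendsto_const_nhds).const_mul χ)
    simpa using h4
  · intro n hn N hN c
    set q := n / m with hq_def
    have hnR : ((n : ℝ)) ≠ 0 := Nat.cast_ne_zero.mpr (by omega)
    have hN' : (N : ℝ) < (χ + χ * (χ₀ ^ (-(n : ℝ)⁻¹) - 1)) ^ n := hN
    have hval : χ + χ * (χ₀ ^ (-(n : ℝ)⁻¹) - 1) = χ₀ ^ ((m : ℝ)⁻¹ + -(n : ℝ)⁻¹) := by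
      rw [Real.rpow_add hchi00, hchi_def]
      ring
    have hpow : (χ + χ * (χ₀ ^ (-(n : ℝ)⁻¹) - 1)) ^ n = χ₀ ^ ((n : ℝ) * (m : ℝ)⁻¹ - 1) := by
      rw [hval, ← Real.rpow_natCast (χ₀ ^ ((m : ℝ)⁻¹ + -(n : ℝ)⁻¹)) n,
        ← Real.rpow_mul hchi00.le]
      congr 1
      field_simp
      ring
    have hqle : (n : ℝ) * (m : ℝ)⁻¹ - 1 ≤ (q : ℝ) := by
      have h1 : n < m * (q + 1) := by
        have hdm := Nat.div_add_mod n m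
        have hdm' : m * q + n % m = n := by rw [hq_def]; exact hdm
        have h2 : n % m < m := Nat.mod_lt _ hm0
        have h3 : m * (q + 1) = m * q + m := by ring
        omega
      have h1R : (n : ℝ) < (m : ℝ) * ((q : ℝ) + 1) := by exact_mod_cast h1
      have h2R : (n : ℝ) * (m : ℝ)⁻¹ < (q : ℝ) + 1 := by
        rw [← div_eq_mul_inv, div_lt_iff₀ hm0R]
        linarith [mul_comm ((q : ℝ) + 1) (m : ℝ)]
      linarith
    have hNlt : (N : ℝ) < χ₀ ^ ((q : ℕ) : ℝ) := by
      calc (N : ℝ) < χ₀ ^ ((n : ℝ) * (m : ℝ)⁻¹ - 1) := by rw [← hpow]; exact hN'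
        _ ≤ χ₀ ^ ((q : ℕ) : ℝ) := by
            apply Real.rpow_le_rpow_left_iff hchi01 |>.mpr hqle
    rw [Real.rpow_natCast] at hNlt
    have hNnat : N * (g - 1) ^ q < g ^ q := by
      have h3 : ((g : ℝ) / ((g : ℝ) - 1)) ^ q * ((g : ℝ) - 1) ^ q = (g : ℝ) ^ q := by
        rw [div_pow, div_mul_cancel₀]
        exact pow_ne_zero _ (ne_of_gt hgpos)
      have h2 : (N : ℝ) * ((g : ℝ) - 1) ^ q < ((g : ℝ)) ^ q := by
        calc (N : ℝ) * ((g : ℝ) - 1) ^ q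
            < ((g : ℝ) / ((g : ℝ) - 1)) ^ q * ((g : ℝ) - 1) ^ q := by
              apply mul_lt_mul_of_pos_right _ (pow_pos hgpos q)
              rw [← hchi0_def]
              exact hNlt
          _ = (g : ℝ) ^ q := h3
      have hgcast : ((g - 1 : ℕ) : ℝ) = (g : ℝ) - 1 := by
        rw [Nat.cast_sub (by omega : 1 ≤ g), Nat.cast_one]
      have h4 : ((N * (g - 1) ^ q : ℕ) : ℝ) < ((g ^ q : ℕ) : ℝ) := by
        push_cast
        rw [hgcast]
        exact h2
      exact_mod_cast h4
    have hqm : q * m ≤ n := by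
      rw [hq_def]
      exact Nat.div_mul_le_self n m
    obtain ⟨f, hfc, hfd⟩ := hmain q N hNnat (fun x => c (Stmt13.pad m q n hm0 hqm x))
    refine ⟨fun p => Stmt13.pad m q n hm0 hqm (f p), fun x y => hfc x y, fun x y => ?_⟩
    rw [Stmt13.pad_dist, hfd]
end

section
/- Let M be a finite metric space with at least two points, let d(M) be its diameter, and let l(M) be the smallest l > 0 such that any two points of M are connected by a chain of points of M with consecutive distances at most l. Fix reals d' and l' with 0 < d' < d(M) and l' > l(M), and let C = [0, d']^n and 𝒞 = ⋃_{v ∈ Z^n} (C + (d'+l')v) ⊂ R^n. Then 𝒞 contains no isometric copy of M with respect to the Chebyshev metric. -/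
/-- The periodic union of cubes `𝒞 = ⋃_{v ∈ ℤ^n} ([0,d']^n + (d'+l')v)` contains
no isometric copy of `M` (Chebyshev metric), where `dM` is the diameter of `M`,
`lM` is the least `l > 0` such that any two points of `M` are joined by a chain
with consecutive distances `≤ l`, and `0 < d' < dM`, `l' > lM`. -/
theorem stmt_14 (M : Type*) [MetricSpace M] [Fintype M]
    (hM : 2 ≤ Fintype.card M)
    (dM : ℝ) (hdM : IsGreatest {r : ℝ | ∃ x y : M, dist x y = r} dM)
    (lM : ℝ)
    (hlM : IsLeast {l : ℝ | 0 < l ∧ ∀ x y : M, ∃ (t : ℕ) (z : ℕ → M),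
      z 0 = x ∧ z t = y ∧ ∀ i < t, dist (z i) (z (i + 1)) ≤ l} lM)
    (d' l' : ℝ) (hd'0 : 0 < d') (hd' : d' < dM) (hl' : lM < l')
    (n : ℕ) (hn : 0 < n) :
    ¬ ∃ f : M → (Fin n → ℝ),
        (∀ x y : M, dist (f x) (f y) = dist x y) ∧
        ∀ x : M, ∃ v : Fin n → ℤ, ∀ i : Fin n,
          (d' + l') * (v i : ℝ) ≤ f x i ∧ f x i ≤ (d' + l') * (v i : ℝ) + d' := by
  rintro ⟨f, hiso, hcube⟩
  set a : ℝ := d' + l' with ha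
  have hlM0 : 0 < lM := hlM.1.1
  have hl'0 : 0 < l' := hlM0.trans hl'
  have ha0 : (0:ℝ) < a := by simp [ha]; linarith
  choose V hV using hcube
  -- points in distinct cubes are at distance at least l'
  have hfar : ∀ x y : M, V x ≠ V y → l' ≤ dist x y := by
    intro x y hne
    obtain ⟨i, hi⟩ := Function.ne_iff.mp hne
    obtain ⟨h1, h2⟩ := hV x i
    obtain ⟨h3, h4⟩ := hV y i
    have key : l' ≤ dist (f x i) (f y i) := by
      rw [Real.dist_eq]
      rcases lt_or_gt_of_ne hi with h | h
      · have hc : (V x i : ℝ) + 1 ≤ V y i := by exact_mod_cast h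
        have hm : a * ((V x i : ℝ) + 1) ≤ a * (V y i : ℝ) :=
          mul_le_mul_of_nonneg_left hc ha0.le
        rcases abs_cases (f x i - f y i) with ⟨he, _⟩ | ⟨he, _⟩ <;> nlinarith
      · have hc : (V y i : ℝ) + 1 ≤ V x i := by exact_mod_cast h
        have hm : a * ((V y i : ℝ) + 1) ≤ a * (V x i : ℝ) :=
          mul_le_mul_of_nonneg_left hc ha0.le
        rcases abs_cases (f x i - f y i) with ⟨he, _⟩ | ⟨he, _⟩ <;> nlinarith
    calc l' ≤ dist (f x i) (f y i) := key
      _ ≤ dist (f x) (f y) := dist_le_pi_dist (f x) (f y) i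
      _ = dist x y := hiso x y
  -- diameter pair
  obtain ⟨x, y, hxy⟩ := hdM.1
  have hdMxy : dist x y = dM := hxy
  -- chain with steps ≤ lM
  obtain ⟨t, z, hz0, hzt, hstep⟩ := hlM.1.2 x y
  have hsame : ∀ k ≤ t, V (z 0) = V (z k) := by
    intro k hk
    induction k with
    | zero => rfl
    | succ m ih =>
      have hm : m ≤ t := Nat.le_of_succ_le hk
      have hml : m < t := Nat.lt_of_succ_le hk
      have := ih hm
      by_contra hne
      have hne' : V (z m) ≠ V (z (m + 1)) := by
        intro h; exact hne (this.trans h)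
      have h1 := hfar _ _ hne'
      have h2 := hstep m hml
      linarith
  have hVxy : V x = V y := by
    have := hsame t le_rfl
    rwa [hz0, hzt] at this
  -- same cube ⇒ distance ≤ d'
  have hclose : dist x y ≤ d' := by
    rw [← hiso]
    rw [dist_pi_le_iff hd'0.le]
    intro i
    obtain ⟨h1, h2⟩ := hV x i
    obtain ⟨h3, h4⟩ := hV y i
    rw [hVxy] at h1 h2
    rw [Real.dist_eq, abs_sub_le_iff]
    constructor <;> linarith
  linarith [hdMxy ▸ hclose]
end
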